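/- arXiv:2006.07651 — 3 statements merged into one kernel-verified Lean document; each statement's English description precedes it below -/
import Mathlib

section
/- Fix b ∈ C_c(ℝ^D) and w ∈ W, and set B_N := (1/w_N) Σ_{n=1}^N w(n/N) b(U_n). Then the following are equivalent: (i) for every fixed m ≥ 1, the limit lim_{N→∞} (1/w_N) Σ_{n=1}^N w(n/N) ∫_Q b(U_n) b(U_m) dy exists; (ii) there exists \bar{b} ∈ L^∞(Q) such that B_N → \bar{b} weak-* in L^∞(Q), i.e., ∫_Q B_N φ dy → ∫_Q \bar{b} φ dy for every φ ∈ L¹(Q). Moreover, if the limits in (i) exist for every w ∈ W and their values are independent of w, then the weak-* limit \bar{b} is the same for every w ∈ W. -/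
open MeasureTheory Filter Topology
open scoped RealInnerProductSpace ENNReal NNReal

noncomputable section

/-- The class `W` of weight functions: `w ∈ C¹([0,1])`, `w ≥ 0` on `[0,1]`,
`∫_0^1 w(z) dz = 1`. -/
def IsWeight (w : ℝ → ℝ) : Prop :=
  ContDiffOn ℝ 1 w (Set.Icc 0 1) ∧ (∀ z ∈ Set.Icc (0 : ℝ) 1, 0 ≤ w z) ∧
    (∫ z in (0 : ℝ)..1, w z) = 1

/-- `w_N = ∑_{n=1}^N w(n/N)`. -/
def wsum (w : ℝ → ℝ) (N : ℕ) : ℝ := ∑ n ∈ Finset.Icc 1 N, w ((n : ℝ) / (N : ℝ))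

/-- approximation lemma: if `u` is uniformly approximated by convergent sequences,
it converges. -/
lemma exists_tendsto_of_approx (u : ℕ → ℝ)
    (h : ∀ ε : ℝ, 0 < ε → ∃ v : ℕ → ℝ, (∃ l, Tendsto v atTop (𝓝 l)) ∧ ∀ N, |u N - v N| ≤ ε) :
    ∃ l, Tendsto u atTop (𝓝 l) := by
  have hc : CauchySeq u := by
    rw [Metric.cauchySeq_iff]
    intro ε hε
    obtain ⟨v, ⟨l, hv⟩, hclose⟩ := h (ε / 4) (by linarith)
    have hvc : CauchySeq v := hv.cauchySeq
    rw [Metric.cauchySeq_iff] at hvc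
    obtain ⟨N₀, hN₀⟩ := hvc (ε / 4) (by linarith)
    refine ⟨N₀, fun m hm n hn => ?_⟩
    have h1 := hclose m
    have h2 := hclose n
    have h3 := hN₀ m hm n hn
    rw [Real.dist_eq] at h3 ⊢
    have : u m - u n = (u m - v m) + (v m - v n) + (v n - u n) := by ring
    rw [this]
    calc |(u m - v m) + (v m - v n) + (v n - u n)|
        ≤ |(u m - v m) + (v m - v n)| + |v n - u n| := abs_add_le _ _
      _ ≤ |u m - v m| + |v m - v n| + |v n - u n| := by gcongr; exact abs_add_le _ _
      _ < ε := by rw [abs_sub_comm (v n)] at *; linarith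
  exact cauchySeq_tendsto_of_complete hc

lemma tendsto_of_approx (u : ℕ → ℝ) (l : ℝ)
    (h : ∀ ε : ℝ, 0 < ε → ∃ (v : ℕ → ℝ) (l' : ℝ), Tendsto v atTop (𝓝 l') ∧
      (∀ N, |u N - v N| ≤ ε) ∧ |l - l'| ≤ ε) :
    Tendsto u atTop (𝓝 l) := by
  rw [Metric.tendsto_atTop]
  intro ε hε
  obtain ⟨v, l', hv, hclose, hl⟩ := h (ε / 4) (by linarith)
  rw [Metric.tendsto_atTop] at hv
  obtain ⟨N₀, hN₀⟩ := hv (ε / 4) (by linarith)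
  refine ⟨N₀, fun n hn => ?_⟩
  have h1 := hclose n
  have h2 := hN₀ n hn
  rw [Real.dist_eq] at h2 ⊢
  have : u n - l = (u n - v n) + (v n - l') + (l' - l) := by ring
  rw [this]
  calc |(u n - v n) + (v n - l') + (l' - l)|
      ≤ |(u n - v n) + (v n - l')| + |l' - l| := abs_add_le _ _
    _ ≤ |u n - v n| + |v n - l'| + |l' - l| := by gcongr; exact abs_add_le _ _
    _ < ε := by rw [abs_sub_comm] at hl; linarith

variable {E : Type*} [NormedAddCommGroup E] [InnerProductSpace ℝ E] [CompleteSpace E]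

/-- Abstract weak-limit lemma in a real Hilbert space. -/
lemma weak_limit_of_inner_tendsto {ι : Type*} (f : ι → E) (x : ℕ → E) (C : ℝ)
    (hC : ∀ N, ‖x N‖ ≤ C)
    (hx : ∀ N, x N ∈ Submodule.span ℝ (Set.range f))
    (h : ∀ m, ∃ l, Tendsto (fun N => ⟪x N, f m⟫) atTop (𝓝 l)) :
    ∃ g : E, g ∈ (Submodule.span ℝ (Set.range f)).topologicalClosure ∧
      ∀ φ : E, Tendsto (fun N => ⟪x N, φ⟫) atTop (𝓝 ⟪g, φ⟫) := by
  set K : Submodule ℝ E := Submodule.span ℝ (Set.range f) with hK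
  set H : Submodule ℝ E := K.topologicalClosure with hH
  have hHclosed : IsClosed (H : Set E) := K.isClosed_topologicalClosure
  haveI : CompleteSpace H := hHclosed.completeSpace_coe
  have hCpos : 0 ≤ C := le_trans (norm_nonneg _) (hC 0)
  -- Step A: limits exist for φ in the span
  have hspan : ∀ φ ∈ K, ∃ l, Tendsto (fun N => ⟪x N, φ⟫) atTop (𝓝 l) := by
    intro φ hφ
    induction hφ using Submodule.span_induction with
    | mem y hy =>
      obtain ⟨m, rfl⟩ := hy
      exact h m
    | zero => exact ⟨0, by simpa using tendsto_const_nhds⟩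
    | add y z _ _ hy hz =>
      obtain ⟨ly, hly⟩ := hy
      obtain ⟨lz, hlz⟩ := hz
      exact ⟨ly + lz, by simpa [inner_add_right] using hly.add hlz⟩
    | smul c y _ hy =>
      obtain ⟨ly, hly⟩ := hy
      exact ⟨c * ly, by simpa [inner_smul_right] using hly.const_mul c⟩
  -- Step B: limits exist for φ in the closure
  have hclos : ∀ φ ∈ H, ∃ l, Tendsto (fun N => ⟪x N, φ⟫) atTop (𝓝 l) := by
    intro φ hφ
    apply exists_tendsto_of_approx
    intro ε hε
    have hφ' : φ ∈ closure (K : Set E) := hφ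
    rcases Metric.mem_closure_iff.1 hφ' (ε / (C + 1)) (by positivity) with ⟨ψ, hψK, hψd⟩
    refine ⟨fun N => ⟪x N, ψ⟫, hspan ψ hψK, fun N => ?_⟩
    have : ⟪x N, φ⟫ - ⟪x N, ψ⟫ = ⟪x N, φ - ψ⟫ := by rw [inner_sub_right]
    rw [this]
    calc |⟪x N, φ - ψ⟫| ≤ ‖x N‖ * ‖φ - ψ‖ := abs_real_inner_le_norm _ _
      _ ≤ C * (ε / (C + 1)) := by
          apply mul_le_mul (hC N) _ (norm_nonneg _) hCpos
          rw [← dist_eq_norm]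
          exact le_of_lt hψd
      _ ≤ ε := by
          rw [div_eq_inv_mul, ← mul_assoc]
          nlinarith [mul_le_of_le_one_left (le_of_lt hε) (show C * (C+1)⁻¹ ≤ 1 by
            rw [mul_inv_le_iff₀ (by positivity)]; linarith)]
  -- Step C: limits exist for all φ
  have hall : ∀ φ : E, ∃ l, Tendsto (fun N => ⟪x N, φ⟫) atTop (𝓝 l) := by
    intro φ
    have hmem : ∀ N, ⟪x N, φ⟫ = ⟪x N, (H.orthogonalProjection φ : E)⟫ := by
      intro N
      have horth : ⟪φ - (H.orthogonalProjection φ : E), x N⟫ = 0 :=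
        Submodule.starProjection_inner_eq_zero φ (x N) (K.le_topologicalClosure (hx N))
      have : ⟪x N, φ - (H.orthogonalProjection φ : E)⟫ = 0 := by
        rw [real_inner_comm]; exact horth
      rw [inner_sub_right] at this
      linarith
    obtain ⟨l, hl⟩ := hclos (H.orthogonalProjection φ : E) (H.orthogonalProjection φ).2
    exact ⟨l, by simpa only [← hmem] using hl⟩
  -- Step D: build the limit functional and apply Riesz
  choose L hL using hall
  have hLadd : ∀ φ ψ : E, L (φ + ψ) = L φ + L ψ := by
    intro φ ψ
    refine tendsto_nhds_unique (hL (φ + ψ)) ?_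
    simpa only [inner_add_right] using (hL φ).add (hL ψ)
  have hLsmul : ∀ (c : ℝ) (φ : E), L (c • φ) = c * L φ := by
    intro c φ
    refine tendsto_nhds_unique (hL (c • φ)) ?_
    simpa only [inner_smul_right] using (hL φ).const_mul c
  have hLbound : ∀ φ : E, ‖L φ‖ ≤ C * ‖φ‖ := by
    intro φ
    have : Tendsto (fun N => |⟪x N, φ⟫|) atTop (𝓝 |L φ|) := (hL φ).abs
    refine le_of_tendsto this (Eventually.of_forall fun N => ?_)
    exact (abs_real_inner_le_norm _ _).trans
      (mul_le_mul_of_nonneg_right (hC N) (norm_nonneg _))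
  set T : E →ₗ[ℝ] ℝ :=
    { toFun := L
      map_add' := hLadd
      map_smul' := hLsmul }
  set T' : E →L[ℝ] ℝ := T.mkContinuous C hLbound with hT'
  have hT'app : ∀ φ, T' φ = L φ := fun φ => rfl
  set g : E := (InnerProductSpace.toDual ℝ E).symm T' with hg
  have hgip : ∀ φ : E, ⟪g, φ⟫ = L φ := by
    intro φ
    rw [hg, InnerProductSpace.toDual_symm_apply]
    exact hT'app φ
  have hgH : g ∈ H := by
    rw [← H.orthogonal_orthogonal]
    rw [Submodule.mem_orthogonal]
    intro v hv
    have h1 : ⟪g, v⟫ = 0 := by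
      rw [hgip v]
      refine tendsto_nhds_unique (hL v) ?_
      have : ∀ N, ⟪x N, v⟫ = (0 : ℝ) := fun N =>
        (Submodule.mem_orthogonal H v).1 hv (x N) (K.le_topologicalClosure (hx N))
      simpa only [this] using (tendsto_const_nhds : Tendsto (fun _ : ℕ => (0:ℝ)) atTop (𝓝 0))
    rw [real_inner_comm] at h1
    exact h1
  exact ⟨g, hgH, fun φ => by rw [hgip φ]; exact hL φ⟩

/-- Uniqueness of an element of the closed span with prescribed inner products. -/
lemma eq_of_inner_eq_on_span {ι : Type*} (f : ι → E) {g₁ g₂ : E}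
    (h₁ : g₁ ∈ (Submodule.span ℝ (Set.range f)).topologicalClosure)
    (h₂ : g₂ ∈ (Submodule.span ℝ (Set.range f)).topologicalClosure)
    (h : ∀ i, ⟪g₁, f i⟫ = ⟪g₂, f i⟫) : g₁ = g₂ := by
  set K : Submodule ℝ E := Submodule.span ℝ (Set.range f) with hK
  have hmem : ∀ u ∈ K, ⟪u, g₁ - g₂⟫ = 0 := by
    intro u hu
    induction hu using Submodule.span_induction with
    | mem y hy =>
      obtain ⟨i, rfl⟩ := hy
      rw [real_inner_comm, inner_sub_left, h i, sub_self]
    | zero => simp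
    | add y z _ _ hy hz => rw [inner_add_left, hy, hz, add_zero]
    | smul c y _ hy => rw [inner_smul_left, hy, mul_zero]
  have hdK : g₁ - g₂ ∈ Kᗮ := (Submodule.mem_orthogonal K _).2 hmem
  have hdH : g₁ - g₂ ∈ Kᗮᗮ := by
    rw [Submodule.orthogonal_orthogonal_eq_closure]
    exact Submodule.sub_mem _ h₁ h₂
  have : ⟪g₁ - g₂, g₁ - g₂⟫ = 0 := (Submodule.mem_orthogonal _ _).1 hdH _ hdK
  exact sub_eq_zero.1 (inner_self_eq_zero.1 this)


section Meas
variable {α : Type*} [MeasurableSpace α] {μ : Measure α} [IsFiniteMeasure μ]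

lemma memL2_of_bdd {f : α → ℝ} (hm : Measurable f) {K : ℝ} (hb : ∀ y, |f y| ≤ K) :
    MemLp f 2 μ :=
  MemLp.of_bound hm.aestronglyMeasurable K
    (Eventually.of_forall fun y => by simpa [Real.norm_eq_abs] using hb y)

lemma integrable_of_bdd {f : α → ℝ} (hm : Measurable f) {K : ℝ} (hb : ∀ y, |f y| ≤ K) :
    Integrable f μ :=
  (memL2_of_bdd hm hb).integrable one_le_two

lemma coeFn_smul_sum {ι : Type*} (s : Finset ι) (c : ι → ℝ) (f : ι → Lp ℝ 2 μ)
    (g : ι → α → ℝ) (h : ∀ i ∈ s, ⇑(f i) =ᵐ[μ] g i) :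
    ⇑(∑ i ∈ s, c i • f i) =ᵐ[μ] fun y => ∑ i ∈ s, c i * g i y := by
  induction s using Finset.cons_induction with
  | empty => simp only [Finset.sum_empty]; exact Lp.coeFn_zero ℝ 2 μ
  | cons a s ha ih =>
    have h1 := Lp.coeFn_add (c a • f a) (∑ i ∈ s, c i • f i)
    have h2 := Lp.coeFn_smul (c a) (f a)
    have h3 := ih fun i hi => h i (Finset.mem_cons_of_mem hi)
    have h4 := h a (Finset.mem_cons_self a s)
    rw [Finset.sum_cons]
    filter_upwards [h1, h2, h3, h4] with y h1 h2 h3 h4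
    simp only [Finset.sum_cons, h1, Pi.add_apply, h2, Pi.smul_apply, smul_eq_mul, h3, h4]

/-- test: inner on L2 real -/
example (f h : Lp ℝ 2 μ) : ⟪f, h⟫ = ∫ y, f y * h y ∂μ := by
  rw [L2.inner_def]
  simp [RCLike.inner_apply]
  exact integral_congr_ae (Eventually.of_forall fun y => mul_comm _ _)

lemma clamp_abs_le {K a : ℝ} (hK : 0 ≤ K) : |max (-K) (min a K)| ≤ K :=
  abs_le.2 ⟨le_max_left _ _, max_le (by linarith) (min_le_right _ _)⟩

lemma clamp_eq_of_abs_le {K a : ℝ} (h : |a| ≤ K) : max (-K) (min a K) = a := by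
  rcases abs_le.1 h with ⟨h1, h2⟩
  rw [min_eq_left h2, max_eq_right h1]

lemma clamp_abs_le_abs {K a : ℝ} (hK : 0 ≤ K) : |max (-K) (min a K)| ≤ |a| := by
  rcases le_total 0 a with h | h
  · rw [max_eq_right ((by linarith : -K ≤ 0).trans (le_min h hK)), abs_of_nonneg (le_min h hK)]
    exact (min_le_left _ _).trans (le_abs_self a)
  · rw [min_eq_left (h.trans hK), abs_of_nonpos (max_le (by linarith) h)]
    rcases le_total (-K) a with h' | h'
    · rw [max_eq_right h']; exact neg_le_abs a
    · rw [max_eq_left h']; rw [abs_of_nonpos h]; linarith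


/-- A weak limit of functions a.e.-bounded by `K` is a.e.-bounded by `K`. -/
lemma ae_bound_of_weak {x : ℕ → Lp ℝ 2 μ} {gL : Lp ℝ 2 μ} {K : ℝ} (hK0 : 0 ≤ K)
    (hxb : ∀ N, ∀ᵐ y ∂μ, |x N y| ≤ K)
    (hconv : ∀ φ : Lp ℝ 2 μ, Tendsto (fun N => ⟪x N, φ⟫) atTop (𝓝 ⟪gL, φ⟫)) :
    ∀ᵐ y ∂μ, |gL y| ≤ K := by
  have hint : ∀ h : Lp ℝ 2 μ, Integrable (⇑h) μ := fun h => (Lp.memLp h).integrable one_le_two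
  -- set-integral bounds for gL
  have key : ∀ A : Set α, MeasurableSet A →
      (∫ y in A, gL y ∂μ) ≤ K * (μ A).toReal ∧
      -(K * (μ A).toReal) ≤ ∫ y in A, gL y ∂μ := by
    intro A hA
    set φ := indicatorConstLp 2 hA (measure_ne_top μ A) (1 : ℝ) with hφ
    have hφx : ∀ h : Lp ℝ 2 μ, ⟪φ, h⟫ = ∫ y in A, h y ∂μ := by
      intro h
      rw [hφ, L2.inner_indicatorConstLp_eq_setIntegral_inner]
      simp [RCLike.inner_apply]
    have hconst : (∫ _ in A, K ∂μ) = K * (μ A).toReal := by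
      rw [setIntegral_const, smul_eq_mul, mul_comm]; rfl
    have hub : ∀ N, (∫ y in A, x N y ∂μ) ≤ K * (μ A).toReal := by
      intro N
      rw [← hconst]
      refine integral_mono_ae ((hint (x N)).integrableOn) (integrableOn_const (measure_ne_top μ A)) ?_
      · exact ae_restrict_of_ae ((hxb N).mono fun y hy => (abs_le.1 hy).2)
    have hlb : ∀ N, -(K * (μ A).toReal) ≤ ∫ y in A, x N y ∂μ := by
      intro N
      have : (∫ _ in A, -K ∂μ) = -(K * (μ A).toReal) := by
        rw [setIntegral_const, smul_eq_mul, mul_comm, neg_mul]; rfl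
      rw [← this]
      refine integral_mono_ae (integrableOn_const (measure_ne_top μ A)) ((hint (x N)).integrableOn) ?_
      · exact ae_restrict_of_ae ((hxb N).mono fun y hy => (abs_le.1 hy).1)
    have htend : Tendsto (fun N => ∫ y in A, x N y ∂μ) atTop (𝓝 (∫ y in A, gL y ∂μ)) := by
      have := hconv φ
      have hc : ∀ h : Lp ℝ 2 μ, ⟪h, φ⟫ = ∫ y in A, h y ∂μ := fun h => by
        rw [real_inner_comm]; exact hφx h
      simpa only [hc] using this
    exact ⟨le_of_tendsto htend (Eventually.of_forall hub),
      ge_of_tendsto htend (Eventually.of_forall hlb)⟩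
  set b1 : α → ℝ := ⇑gL with hb1
  have hb1m : Measurable b1 := (Lp.stronglyMeasurable gL).measurable
  have hup : ∀ k : ℕ, μ {y | K + 1 / ((k : ℝ) + 1) ≤ b1 y} = 0 := by
    intro k
    set ε : ℝ := 1 / ((k : ℝ) + 1) with hε
    have hεpos : 0 < ε := by positivity
    set A := {y | K + ε ≤ b1 y} with hAdef
    have hA : MeasurableSet A := measurableSet_le measurable_const hb1m
    have h1 : (K + ε) * (μ A).toReal ≤ ∫ y in A, b1 y ∂μ :=
      setIntegral_ge_of_const_le_real hA (measure_ne_top μ A) (fun y hy => hy)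
        ((hint gL).integrableOn)
    have h2 := (key A hA).1
    have hT : (0 : ℝ) ≤ (μ A).toReal := ENNReal.toReal_nonneg
    have : (μ A).toReal = 0 := by nlinarith
    rcases (ENNReal.toReal_eq_zero_iff _).1 this with h | h
    · exact h
    · exact absurd h (measure_ne_top μ A)
  have hdown : ∀ k : ℕ, μ {y | b1 y ≤ -(K + 1 / ((k : ℝ) + 1))} = 0 := by
    intro k
    set ε : ℝ := 1 / ((k : ℝ) + 1) with hε
    have hεpos : 0 < ε := by positivity
    set A := {y | b1 y ≤ -(K + ε)} with hAdef
    have hA : MeasurableSet A := measurableSet_le hb1m measurable_const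
    have h1 : (∫ y in A, b1 y ∂μ) ≤ -(K + ε) * (μ A).toReal := by
      have hconst : (∫ _ in A, -(K + ε) ∂μ) = -(K + ε) * (μ A).toReal := by
        rw [setIntegral_const, smul_eq_mul, mul_comm]; rfl
      rw [← hconst]
      refine integral_mono_ae ((hint gL).integrableOn) (integrableOn_const (measure_ne_top μ A)) ?_
      · exact (ae_restrict_mem hA).mono fun y hy => hy
    have h2 := (key A hA).2
    have hT : (0 : ℝ) ≤ (μ A).toReal := ENNReal.toReal_nonneg
    have : (μ A).toReal = 0 := by nlinarith
    rcases (ENNReal.toReal_eq_zero_iff _).1 this with h | h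
    · exact h
    · exact absurd h (measure_ne_top μ A)
  -- combine
  rw [ae_iff]
  refine measure_mono_null (fun y hy => ?_)
    (measure_union_null (measure_iUnion_null hup) (measure_iUnion_null hdown))
  simp only [Set.mem_setOf_eq, not_le] at hy
  rcases lt_or_ge K (b1 y) with h | h
  · obtain ⟨k, hk⟩ := exists_nat_one_div_lt (show (0:ℝ) < b1 y - K by linarith)
    exact Set.mem_union_left _ (Set.mem_iUnion.2 ⟨k, by simp only [Set.mem_setOf_eq]; push_cast; linarith⟩)
  · have hneg : b1 y < -K := by
      by_contra hcon
      push_neg at hcon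
      exact absurd (abs_le.2 ⟨hcon, h⟩) (not_le.2 hy)
    obtain ⟨k, hk⟩ := exists_nat_one_div_lt (show (0:ℝ) < -b1 y - K by linarith)
    exact Set.mem_union_right _ (Set.mem_iUnion.2 ⟨k, by simp only [Set.mem_setOf_eq]; push_cast; linarith⟩)

/-- weak-* convergence against bounded test functions upgrades to `L¹` test functions,
for a sequence uniformly bounded by `K`. -/
lemma tendsto_integral_mul_L1 {x : ℕ → α → ℝ} {K : ℝ} (hK0 : 0 ≤ K)
    (hxm : ∀ N, Measurable (x N)) (hxb : ∀ N y, |x N y| ≤ K)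
    {bbar : α → ℝ} (hbm : Measurable bbar) (hbb : ∀ y, |bbar y| ≤ K)
    (hψ : ∀ ψ : α → ℝ, Measurable ψ → (∃ c, ∀ y, |ψ y| ≤ c) →
      Tendsto (fun N => ∫ y, x N y * ψ y ∂μ) atTop (𝓝 (∫ y, bbar y * ψ y ∂μ)))
    {φ : α → ℝ} (hφ : Integrable φ μ) :
    Tendsto (fun N => ∫ y, x N y * φ y ∂μ) atTop (𝓝 (∫ y, bbar y * φ y ∂μ)) := by
  -- replace φ by a measurable representative
  set φ' : α → ℝ := hφ.1.mk φ with hφ'def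
  have hφ'sm : StronglyMeasurable φ' := hφ.1.stronglyMeasurable_mk
  have hφ'm : Measurable φ' := hφ'sm.measurable
  have hφ'ae : φ =ᵐ[μ] φ' := hφ.1.ae_eq_mk
  have hφ'int : Integrable φ' μ := hφ.congr hφ'ae
  have e1 : ∀ N, (∫ y, x N y * φ y ∂μ) = ∫ y, x N y * φ' y ∂μ := fun N =>
    integral_congr_ae (hφ'ae.mono fun y hy => by simp only [hy])
  have e2 : (∫ y, bbar y * φ y ∂μ) = ∫ y, bbar y * φ' y ∂μ :=
    integral_congr_ae (hφ'ae.mono fun y hy => by simp only [hy])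
  simp only [e1, e2]
  -- truncations
  set ψk : ℕ → α → ℝ := fun k y => max (-(k : ℝ)) (min (φ' y) (k : ℝ)) with hψkdef
  have hψkm : ∀ k, Measurable (ψk k) := fun k =>
    measurable_const.max (hφ'm.min measurable_const)
  have hψkb : ∀ k y, |ψk k y| ≤ (k : ℝ) := fun k y => clamp_abs_le (Nat.cast_nonneg k)
  have hψkle : ∀ k y, |ψk k y| ≤ |φ' y| := fun k y => clamp_abs_le_abs (Nat.cast_nonneg k)
  have hψkint : ∀ k, Integrable (ψk k) μ := fun k => integrable_of_bdd (hψkm k) (hψkb k)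
  have hψktend : ∀ y, Tendsto (fun k => ψk k y) atTop (𝓝 (φ' y)) := by
    intro y
    refine tendsto_atTop_of_eventually_const (i₀ := ⌈|φ' y|⌉₊) fun k hk => ?_
    have h1 : |φ' y| ≤ (k : ℝ) := (Nat.le_ceil _).trans (Nat.cast_le.2 hk)
    rw [hψkdef]
    simp only
    rw [min_eq_left ((le_abs_self _).trans h1),
      max_eq_right (by rcases abs_le.1 h1 with ⟨a, _⟩; linarith)]
  have hδ : Tendsto (fun k => ∫ y, |φ' y - ψk k y| ∂μ) atTop (𝓝 0) := by
    have h0 : (0 : ℝ) = ∫ _, (0 : ℝ) ∂μ := by simp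
    rw [h0]
    refine tendsto_integral_of_dominated_convergence (fun y => 2 * |φ' y|)
      (fun k => ((hφ'm.sub (hψkm k)).abs).aestronglyMeasurable)
      (hφ'int.abs.const_mul 2) (fun k => Eventually.of_forall fun y => ?_)
      (Eventually.of_forall fun y => ?_)
    · rw [Real.norm_eq_abs, abs_abs]
      calc |φ' y - ψk k y| ≤ |φ' y| + |ψk k y| := abs_sub _ _
        _ ≤ 2 * |φ' y| := by linarith [hψkle k y]
    · have := ((hψktend y).const_sub (φ' y)).abs
      simpa using this
  -- main estimate
  apply tendsto_of_approx
  intro ε hε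
  have hεK : 0 < ε / (K + 1) := by positivity
  obtain ⟨k, hk⟩ : ∃ k, (∫ y, |φ' y - ψk k y| ∂μ) < ε / (K + 1) := by
    have := hδ.eventually (eventually_lt_nhds hεK)
    exact this.exists
  have hdint : Integrable (fun y => φ' y - ψk k y) μ := hφ'int.sub (hψkint k)
  have hest : ∀ z : α → ℝ, Measurable z → (∀ y, |z y| ≤ K) →
      |(∫ y, z y * φ' y ∂μ) - ∫ y, z y * ψk k y ∂μ| ≤ K * ∫ y, |φ' y - ψk k y| ∂μ := by
    intro z hzm hzb
    have hzb' : ∃ c, ∀ y, ‖z y‖ ≤ c := ⟨K, fun y => by rw [Real.norm_eq_abs]; exact hzb y⟩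
    have hint1 : Integrable (fun y => z y * φ' y) μ :=
      hφ'int.bdd_mul hzm.aestronglyMeasurable (Eventually.of_forall hzb'.choose_spec)
    have hint2 : Integrable (fun y => z y * ψk k y) μ :=
      (hψkint k).bdd_mul hzm.aestronglyMeasurable (Eventually.of_forall hzb'.choose_spec)
    have hint3 : Integrable (fun y => z y * (φ' y - ψk k y)) μ := by
      simp only [mul_sub]; exact hint1.sub hint2
    rw [← integral_sub hint1 hint2]
    have he : ∀ y, z y * φ' y - z y * ψk k y = z y * (φ' y - ψk k y) := fun y => by ring
    simp only [he]
    calc |∫ y, z y * (φ' y - ψk k y) ∂μ| ≤ ∫ y, |z y * (φ' y - ψk k y)| ∂μ :=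
          by simpa only [Real.norm_eq_abs] using
            norm_integral_le_integral_norm (fun y => z y * (φ' y - ψk k y))
      _ ≤ ∫ y, K * |φ' y - ψk k y| ∂μ := by
          refine integral_mono hint3.abs (hdint.abs.const_mul K) fun y => ?_
          rw [abs_mul]
          exact mul_le_mul_of_nonneg_right (hzb y) (abs_nonneg _)
      _ = K * ∫ y, |φ' y - ψk k y| ∂μ := integral_const_mul K _
  have hbound : K * (∫ y, |φ' y - ψk k y| ∂μ) ≤ ε := by
    have h1 : K * (∫ y, |φ' y - ψk k y| ∂μ) ≤ K * (ε / (K + 1)) :=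
      mul_le_mul_of_nonneg_left hk.le hK0
    have h2 : K * (ε / (K + 1)) ≤ ε := by
      rw [mul_div_assoc']
      rw [div_le_iff₀ (by linarith : (0:ℝ) < K + 1)]
      nlinarith
    linarith
  refine ⟨fun N => ∫ y, x N y * ψk k y ∂μ, ∫ y, bbar y * ψk k y ∂μ,
    hψ (ψk k) (hψkm k) ⟨k, hψkb k⟩, fun N => ?_, ?_⟩
  · exact (hest (x N) (hxm N) (hxb N)).trans hbound
  · exact (hest bbar hbm hbb).trans hbound

lemma isWeight_one : IsWeight (fun _ : ℝ => (1 : ℝ)) := by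
  refine ⟨contDiffOn_const, fun z _ => zero_le_one, by simp⟩

lemma master {α : Type*} [MeasurableSpace α] (μ : Measure α) [IsFiniteMeasure μ]
    (g : ℕ → α → ℝ) (hgm : ∀ n, Measurable (g n)) (K : ℝ) (hK0 : 0 ≤ K)
    (hgb : ∀ n y, |g n y| ≤ K) :
    (∀ w : ℝ → ℝ, IsWeight w →
      ((∀ m : ℕ, 1 ≤ m → ∃ l : ℝ,
          Tendsto (fun N => (wsum w N)⁻¹ *
              ∑ n ∈ Finset.Icc 1 N, w ((n : ℝ) / (N : ℝ)) * ∫ y, g n y * g m y ∂μ)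
            atTop (𝓝 l)) ↔
        (∃ bbar : α → ℝ, Measurable bbar ∧ (∃ C : ℝ, ∀ y, |bbar y| ≤ C) ∧
          ∀ φ : α → ℝ, Integrable φ μ →
            Tendsto (fun N => ∫ y,
                ((wsum w N)⁻¹ * ∑ n ∈ Finset.Icc 1 N, w ((n : ℝ) / (N : ℝ)) * g n y) * φ y ∂μ)
              atTop (𝓝 (∫ y, bbar y * φ y ∂μ)))))
    ∧
    ((∃ ℓ : ℕ → ℝ, ∀ w : ℝ → ℝ, IsWeight w → ∀ m : ℕ, 1 ≤ m →
        Tendsto (fun N => (wsum w N)⁻¹ *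
            ∑ n ∈ Finset.Icc 1 N, w ((n : ℝ) / (N : ℝ)) * ∫ y, g n y * g m y ∂μ)
          atTop (𝓝 (ℓ m))) →
      ∃ bbar : α → ℝ, Measurable bbar ∧ (∃ C : ℝ, ∀ y, |bbar y| ≤ C) ∧
        ∀ w : ℝ → ℝ, IsWeight w →
          ∀ φ : α → ℝ, Integrable φ μ →
            Tendsto (fun N => ∫ y,
                ((wsum w N)⁻¹ * ∑ n ∈ Finset.Icc 1 N, w ((n : ℝ) / (N : ℝ)) * g n y) * φ y ∂μ)
              atTop (𝓝 (∫ y, bbar y * φ y ∂μ))) := by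
  classical
  have hmem : ∀ n, MemLp (g n) 2 μ := fun n => memL2_of_bdd (hgm n) (hgb n)
  set F : ℕ → Lp ℝ 2 μ := fun n => (hmem n).toLp (g n) with hF
  have hFcoe : ∀ n, ⇑(F n) =ᵐ[μ] g n := fun n => (hmem n).coeFn_toLp
  set Bf : (ℝ → ℝ) → ℕ → α → ℝ :=
    fun w N y => (wsum w N)⁻¹ * ∑ n ∈ Finset.Icc 1 N, w ((n : ℝ) / (N : ℝ)) * g n y with hBf
  -- nonnegativity of weights at sample points
  have hwnn : ∀ w : ℝ → ℝ, IsWeight w → ∀ N : ℕ, ∀ n ∈ Finset.Icc 1 N,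
      0 ≤ w ((n : ℝ) / (N : ℝ)) := by
    intro w hw N n hn
    rw [Finset.mem_Icc] at hn
    have hN : 0 < (N : ℝ) := by
      have : 1 ≤ N := le_trans hn.1 hn.2
      exact_mod_cast Nat.pos_of_ne_zero (by omega)
    refine hw.2.1 _ ⟨div_nonneg (Nat.cast_nonneg n) (Nat.cast_nonneg N), ?_⟩
    rw [div_le_one hN]
    exact_mod_cast hn.2
  have hwsnn : ∀ w : ℝ → ℝ, IsWeight w → ∀ N, 0 ≤ wsum w N := fun w hw N =>
    Finset.sum_nonneg (hwnn w hw N)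
  -- pointwise bound on B_N
  have hBb : ∀ w : ℝ → ℝ, IsWeight w → ∀ N y, |Bf w N y| ≤ K := by
    intro w hw N y
    have h1 : |∑ n ∈ Finset.Icc 1 N, w ((n : ℝ) / (N : ℝ)) * g n y| ≤ wsum w N * K := by
      calc |∑ n ∈ Finset.Icc 1 N, w ((n : ℝ) / (N : ℝ)) * g n y|
          ≤ ∑ n ∈ Finset.Icc 1 N, |w ((n : ℝ) / (N : ℝ)) * g n y| :=
            Finset.abs_sum_le_sum_abs _ _
        _ ≤ ∑ n ∈ Finset.Icc 1 N, w ((n : ℝ) / (N : ℝ)) * K := by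
            refine Finset.sum_le_sum fun n hn => ?_
            rw [abs_mul, abs_of_nonneg (hwnn w hw N n hn)]
            exact mul_le_mul_of_nonneg_left (hgb n y) (hwnn w hw N n hn)
        _ = wsum w N * K := by rw [wsum, Finset.sum_mul]
    rcases eq_or_lt_of_le (hwsnn w hw N) with h0 | h0
    · rw [hBf]
      simp only
      rw [abs_mul, ← h0, inv_zero, abs_zero, zero_mul]
      exact hK0
    · rw [hBf]
      simp only
      rw [abs_mul, abs_of_nonneg (inv_nonneg.2 h0.le)]
      calc (wsum w N)⁻¹ * |∑ n ∈ Finset.Icc 1 N, w ((n : ℝ) / (N : ℝ)) * g n y|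
          ≤ (wsum w N)⁻¹ * (wsum w N * K) :=
            mul_le_mul_of_nonneg_left h1 (inv_nonneg.2 h0.le)
        _ = K := by field_simp
  have hBm : ∀ w N, Measurable (Bf w N) := fun w N =>
    (Finset.measurable_sum _ fun n _ => (hgm n).const_mul _).const_mul _
  -- the Lp elements
  set BL : (ℝ → ℝ) → ℕ → Lp ℝ 2 μ :=
    fun w N => (wsum w N)⁻¹ • ∑ n ∈ Finset.Icc 1 N, w ((n : ℝ) / (N : ℝ)) • F n with hBL
  have hBLcoe : ∀ w N, ⇑(BL w N) =ᵐ[μ] Bf w N := by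
    intro w N
    have h1 := Lp.coeFn_smul ((wsum w N)⁻¹)
      (∑ n ∈ Finset.Icc 1 N, w ((n : ℝ) / (N : ℝ)) • F n)
    have h2 := coeFn_smul_sum (Finset.Icc 1 N) (fun n => w ((n : ℝ) / (N : ℝ))) F g
      fun n _ => hFcoe n
    filter_upwards [h1, h2] with y h1 h2
    rw [hBL, hBf]
    simp only
    rw [h1, Pi.smul_apply, smul_eq_mul, h2]
  have hBLmem : ∀ w N, BL w N ∈ Submodule.span ℝ (Set.range fun k => F (k + 1)) := by
    intro w N
    refine Submodule.smul_mem _ _ (Submodule.sum_mem _ fun n hn => Submodule.smul_mem _ _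
      (Submodule.subset_span ⟨n - 1, ?_⟩))
    rw [Finset.mem_Icc] at hn
    simp only
    congr 1
    omega
  set Cb : ℝ := (measureUnivNNReal μ : ℝ) ^ (2 : ℝ≥0∞).toReal⁻¹ * K with hCb
  have hBLnorm : ∀ w : ℝ → ℝ, IsWeight w → ∀ N, ‖BL w N‖ ≤ Cb := by
    intro w hw N
    refine Lp.norm_le_of_ae_bound hK0 ((hBLcoe w N).mono fun y h => ?_)
    rw [Real.norm_eq_abs, h]
    exact hBb w hw N y
  -- inner products
  have hinner : ∀ w N (h : α → ℝ) (hh : MemLp h 2 μ),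
      ⟪BL w N, hh.toLp h⟫ = ∫ y, Bf w N y * h y ∂μ := by
    intro w N h hh
    rw [L2.inner_def]
    refine integral_congr_ae ?_
    filter_upwards [hBLcoe w N, hh.coeFn_toLp] with y h1 h2
    simp only [RCLike.inner_apply, conj_trivial]
    rw [h1, h2]
    exact mul_comm _ _
  have hintgg : ∀ n m, Integrable (fun y => g n y * g m y) μ := fun n m =>
    integrable_of_bdd ((hgm n).mul (hgm m)) (K := K * K) fun y => by
      rw [abs_mul]
      exact mul_le_mul (hgb n y) (hgb m y) (abs_nonneg _) hK0
  have hBint : ∀ w N m, (∫ y, Bf w N y * g m y ∂μ) =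
      (wsum w N)⁻¹ * ∑ n ∈ Finset.Icc 1 N, w ((n : ℝ) / (N : ℝ)) * ∫ y, g n y * g m y ∂μ := by
    intro w N m
    have he : ∀ y, Bf w N y * g m y =
        (wsum w N)⁻¹ * ∑ n ∈ Finset.Icc 1 N, w ((n : ℝ) / (N : ℝ)) * (g n y * g m y) := by
      intro y
      rw [hBf]
      simp only
      rw [mul_assoc, Finset.sum_mul]
      congr 1
      exact Finset.sum_congr rfl fun n _ => mul_assoc _ _ _
    simp only [he]
    rw [integral_const_mul, integral_finset_sum _ fun n _ => (hintgg n m).const_mul _]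
    simp_rw [integral_const_mul]
  have hcorr : ∀ w N m, ⟪BL w N, F m⟫ =
      (wsum w N)⁻¹ * ∑ n ∈ Finset.Icc 1 N, w ((n : ℝ) / (N : ℝ)) * ∫ y, g n y * g m y ∂μ := by
    intro w N m
    rw [hF]
    simp only
    rw [hinner w N (g m) (hmem m)]
    exact hBint w N m
  have hBLaeb : ∀ w : ℝ → ℝ, IsWeight w → ∀ N, ∀ᵐ y ∂μ, |(BL w N : Lp ℝ 2 μ) y| ≤ K := by
    intro w hw N
    filter_upwards [hBLcoe w N] with y h
    rw [h]
    exact hBb w hw N y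
  -- the main construction, for any weight whose correlation limits exist
  have hconstr : ∀ w : ℝ → ℝ, IsWeight w →
      (∀ m : ℕ, 1 ≤ m → ∃ l : ℝ,
        Tendsto (fun N => (wsum w N)⁻¹ *
            ∑ n ∈ Finset.Icc 1 N, w ((n : ℝ) / (N : ℝ)) * ∫ y, g n y * g m y ∂μ)
          atTop (𝓝 l)) →
      ∃ gL : Lp ℝ 2 μ,
        gL ∈ (Submodule.span ℝ (Set.range fun k => F (k + 1))).topologicalClosure ∧
        (∀ᵐ y ∂μ, |gL y| ≤ K) ∧
        (∀ m : ℕ, 1 ≤ m →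
          Tendsto (fun N => (wsum w N)⁻¹ *
              ∑ n ∈ Finset.Icc 1 N, w ((n : ℝ) / (N : ℝ)) * ∫ y, g n y * g m y ∂μ)
            atTop (𝓝 ⟪gL, F m⟫)) ∧
        (∀ bbar : α → ℝ, Measurable bbar → (∀ y, |bbar y| ≤ K) → bbar =ᵐ[μ] ⇑gL →
          ∀ φ : α → ℝ, Integrable φ μ →
            Tendsto (fun N => ∫ y, Bf w N y * φ y ∂μ) atTop (𝓝 (∫ y, bbar y * φ y ∂μ))) := by
    intro w hw hlim
    have h' : ∀ k : ℕ, ∃ l, Tendsto (fun N => ⟪BL w N, F (k + 1)⟫) atTop (𝓝 l) := by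
      intro k
      obtain ⟨l, hl⟩ := hlim (k + 1) (Nat.le_add_left 1 k)
      exact ⟨l, by simp only [hcorr]; exact hl⟩
    obtain ⟨gL, hgH, hgconv⟩ := weak_limit_of_inner_tendsto (fun k => F (k + 1)) (BL w) Cb
      (hBLnorm w hw) (hBLmem w) h'
    have haeb := ae_bound_of_weak hK0 (hBLaeb w hw) hgconv
    refine ⟨gL, hgH, haeb, ?_, ?_⟩
    · intro m hm
      have := hgconv (F m)
      simpa only [hcorr] using this
    · intro bbar hbm hbb hbae φ hφ
      refine tendsto_integral_mul_L1 hK0 (hBm w) (hBb w hw) hbm hbb ?_ hφ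
      rintro ψ hψm ⟨c, hc⟩
      have hψmem : MemLp ψ 2 μ := memL2_of_bdd hψm hc
      have h1 := hgconv (hψmem.toLp ψ)
      have h2 : ∀ N, ⟪BL w N, hψmem.toLp ψ⟫ = ∫ y, Bf w N y * ψ y ∂μ := fun N =>
        hinner w N ψ hψmem
      have h3 : ⟪gL, hψmem.toLp ψ⟫ = ∫ y, bbar y * ψ y ∂μ := by
        rw [L2.inner_def]
        refine integral_congr_ae ?_
        filter_upwards [hψmem.coeFn_toLp, hbae] with y hy hb
        simp only [RCLike.inner_apply, conj_trivial]
        rw [hy, hb]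
        exact mul_comm _ _
      rw [← h3]
      simp only [← h2]
      exact h1
  -- clamping a weak limit to a bounded measurable representative
  have hclamp : ∀ gL : Lp ℝ 2 μ, (∀ᵐ y ∂μ, |gL y| ≤ K) →
      ∃ bbar : α → ℝ, Measurable bbar ∧ (∀ y, |bbar y| ≤ K) ∧ bbar =ᵐ[μ] ⇑gL := by
    intro gL haeb
    refine ⟨fun y => max (-K) (min (gL y) K),
      measurable_const.max (((Lp.stronglyMeasurable gL).measurable).min measurable_const),
      fun y => clamp_abs_le hK0, ?_⟩
    filter_upwards [haeb] with y h
    exact clamp_eq_of_abs_le h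
  constructor
  · intro w hw
    constructor
    · intro hlim
      obtain ⟨gL, hgH, haeb, hcorrt, hL1⟩ := hconstr w hw hlim
      obtain ⟨bbar, hbm, hbb, hbae⟩ := hclamp gL haeb
      exact ⟨bbar, hbm, ⟨K, hbb⟩, fun φ hφ => hL1 bbar hbm hbb hbae φ hφ⟩
    · rintro ⟨bbar, hbm, ⟨C, hbC⟩, hconv⟩ m hm
      refine ⟨∫ y, bbar y * g m y ∂μ, ?_⟩
      have h1 := hconv (g m) (integrable_of_bdd (hgm m) (hgb m))
      simp only [← hBint]
      exact h1
  · rintro ⟨ℓ, hℓ⟩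
    have hw₀ : IsWeight (fun _ : ℝ => (1 : ℝ)) := isWeight_one
    obtain ⟨gL₀, hgH₀, haeb₀, hcorrt₀, hL1₀⟩ :=
      hconstr _ hw₀ fun m hm => ⟨ℓ m, hℓ _ hw₀ m hm⟩
    obtain ⟨bbar, hbm, hbb, hbae⟩ := hclamp gL₀ haeb₀
    refine ⟨bbar, hbm, ⟨K, hbb⟩, ?_⟩
    intro w hw φ hφ
    obtain ⟨gL, hgH, haeb, hcorrt, hL1⟩ := hconstr w hw fun m hm => ⟨ℓ m, hℓ w hw m hm⟩
    have hEq : gL = gL₀ := by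
      refine eq_of_inner_eq_on_span (fun k => F (k + 1)) hgH hgH₀ fun k => ?_
      have e1 : ⟪gL, F (k + 1)⟫ = ℓ (k + 1) :=
        tendsto_nhds_unique (hcorrt (k + 1) (by omega)) (hℓ w hw (k + 1) (by omega))
      have e2 : ⟪gL₀, F (k + 1)⟫ = ℓ (k + 1) :=
        tendsto_nhds_unique (hcorrt₀ (k + 1) (by omega)) (hℓ _ hw₀ (k + 1) (by omega))
      rw [e1, e2]
    have hbae' : bbar =ᵐ[μ] ⇑gL := hEq ▸ hbae
    exact hL1 bbar hbm hbb hbae' φ hφ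


/-- Lemma 2.1: for fixed `b ∈ C_c(ℝ^D)` and `w ∈ W`, existence of the
weighted correlation limits for all `m` is equivalent to weak-* convergence in `L^∞(Q)` of
`B_N = (1/w_N) ∑_{n=1}^N w(n/N) b(U_n)`; moreover, if the correlation limits exist for every
`w ∈ W` and are independent of `w`, then the weak-* limit is the same for every `w ∈ W`. -/
theorem stmt1 {M D : ℕ} (Q : Set (Fin M → ℝ)) (hQm : MeasurableSet Q)
    (hQfin : volume Q < ⊤)
    (U : ℕ → (Fin M → ℝ) → EuclideanSpace ℝ (Fin D)) (hU : ∀ n, Measurable (U n))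
    (b : EuclideanSpace ℝ (Fin D) → ℝ) (hb : Continuous b) (hbc : HasCompactSupport b) :
    (∀ w : ℝ → ℝ, IsWeight w →
      ((∀ m : ℕ, 1 ≤ m → ∃ l : ℝ,
          Tendsto (fun N => (wsum w N)⁻¹ *
              ∑ n ∈ Finset.Icc 1 N, w ((n : ℝ) / (N : ℝ)) * ∫ y in Q, b (U n y) * b (U m y))
            atTop (𝓝 l)) ↔
        (∃ bbar : (Fin M → ℝ) → ℝ, Measurable bbar ∧ (∃ C : ℝ, ∀ y, |bbar y| ≤ C) ∧
          ∀ φ : (Fin M → ℝ) → ℝ, Integrable φ (volume.restrict Q) →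
            Tendsto (fun N => ∫ y in Q,
                ((wsum w N)⁻¹ * ∑ n ∈ Finset.Icc 1 N, w ((n : ℝ) / (N : ℝ)) * b (U n y)) * φ y)
              atTop (𝓝 (∫ y in Q, bbar y * φ y)))))
    ∧
    ((∃ ℓ : ℕ → ℝ, ∀ w : ℝ → ℝ, IsWeight w → ∀ m : ℕ, 1 ≤ m →
        Tendsto (fun N => (wsum w N)⁻¹ *
            ∑ n ∈ Finset.Icc 1 N, w ((n : ℝ) / (N : ℝ)) * ∫ y in Q, b (U n y) * b (U m y))
          atTop (𝓝 (ℓ m))) →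
      ∃ bbar : (Fin M → ℝ) → ℝ, Measurable bbar ∧ (∃ C : ℝ, ∀ y, |bbar y| ≤ C) ∧
        ∀ w : ℝ → ℝ, IsWeight w →
          ∀ φ : (Fin M → ℝ) → ℝ, Integrable φ (volume.restrict Q) →
            Tendsto (fun N => ∫ y in Q,
                ((wsum w N)⁻¹ * ∑ n ∈ Finset.Icc 1 N, w ((n : ℝ) / (N : ℝ)) * b (U n y)) * φ y)
              atTop (𝓝 (∫ y in Q, bbar y * φ y))) := by
  haveI : IsFiniteMeasure (volume.restrict Q) :=
    ⟨by rwa [Measure.restrict_apply_univ]⟩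
  obtain ⟨K, hK⟩ := hbc.exists_bound_of_continuous hb
  have hK0 : 0 ≤ K := le_trans (norm_nonneg (b 0)) (hK 0)
  exact master (volume.restrict Q) (fun n y => b (U n y))
    (fun n => hb.measurable.comp (hU n)) K hK0
    (fun n y => by rw [← Real.norm_eq_abs]; exact hK (U n y))
end Meas
end
end

section
/- The sequence (U_n)_{n≥1} is weakly (S)-convergent if and only if for every b ∈ C_c(ℝ^D) there exists \bar{b} ∈ L^∞(Q) such that (1/N) Σ_{n=1}^N b(U_n) → \bar{b} strongly in L¹(Q) as N → ∞. -/
open MeasureTheory Filter Topology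

noncomputable section

/-- Clamping to `[-C, C]` is 1-Lipschitz. -/
lemma clamp_abs_sub_le (C s t : ℝ) :
    |max (-C) (min C s) - max (-C) (min C t)| ≤ |s - t| := by
  calc |max (-C) (min C s) - max (-C) (min C t)|
      = |max (min C s) (-C) - max (min C t) (-C)| := by
        rw [max_comm (-C) (min C s), max_comm (-C) (min C t)]
    _ ≤ |min C s - min C t| := abs_max_sub_max_le_abs _ _ _
    _ ≤ max |C - C| |s - t| := abs_min_sub_min_le_max _ _ _ _
    _ = |s - t| := by simp

lemma tendsto_of_abs_sub_le {x c : ℕ → ℝ} {l : ℝ}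
    (h : ∀ N, |x N - l| ≤ c N) (hc : Tendsto c atTop (𝓝 0)) :
    Tendsto x atTop (𝓝 l) := by
  have h0 : Tendsto (fun N => x N - l) atTop (𝓝 0) :=
    squeeze_zero_norm (fun N => by simpa using h N) hc
  simpa using h0.add_const l

/-- Integrability of a bounded measurable real function w.r.t. a finite measure. -/
lemma integrable_of_meas_bound {α : Type*} [MeasurableSpace α] {μ : Measure α}
    [IsFiniteMeasure μ] {f : α → ℝ} {K : ℝ} (hf : Measurable f) (hbf : ∀ x, |f x| ≤ K) :
    Integrable f μ :=
  ⟨hf.aestronglyMeasurable, HasFiniteIntegral.of_bounded (C := K)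
    (ae_of_all _ fun a => by rw [Real.norm_eq_abs]; exact hbf a)⟩

lemma integrable_mul_of_bound {α : Type*} [MeasurableSpace α] {μ : Measure α}
    [IsFiniteMeasure μ] {f h : α → ℝ} {K1 K2 : ℝ} (hf : Measurable f) (hh : Measurable h)
    (hbf : ∀ x, |f x| ≤ K1) (hbh : ∀ x, |h x| ≤ K2) :
    Integrable (fun a => f a * h a) μ := by
  refine integrable_of_meas_bound (K := K1 * K2) (hf.mul hh) fun a => ?_
  rw [abs_mul]
  exact mul_le_mul (hbf a) (hbh a) (abs_nonneg _) ((abs_nonneg _).trans (hbf a))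

/-- Integral of a product of finite sums of uniformly bounded measurable functions. -/
lemma aux_int_prod {α : Type*} [MeasurableSpace α] (μ : Measure α) [IsFiniteMeasure μ]
    {g : ℕ → α → ℝ} (hmeas : ∀ n, Measurable (g n)) {C : ℝ} (hbd : ∀ n x, |g n x| ≤ C)
    (s t : Finset ℕ) :
    ∫ a, (∑ n ∈ s, g n a) * (∑ m ∈ t, g m a) ∂μ
      = ∑ n ∈ s, ∑ m ∈ t, ∫ a, g n a * g m a ∂μ := by
  have hint : ∀ n m : ℕ, Integrable (fun a => g n a * g m a) μ := fun n m =>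
    integrable_mul_of_bound (hmeas n) (hmeas m) (hbd n) (hbd m)
  calc ∫ a, (∑ n ∈ s, g n a) * (∑ m ∈ t, g m a) ∂μ
      = ∫ a, ∑ n ∈ s, ∑ m ∈ t, g n a * g m a ∂μ := by
        refine integral_congr_ae (ae_of_all _ fun a => ?_)
        simp only []
        rw [Finset.sum_mul_sum]
    _ = ∑ n ∈ s, ∑ m ∈ t, ∫ a, g n a * g m a ∂μ := by
        rw [integral_finset_sum _ fun n _ => integrable_finset_sum _ fun m _ => hint n m]
        exact Finset.sum_congr rfl fun n _ => integral_finset_sum _ fun m _ => hint n m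

/-- Bound on the Cesàro averages. -/
lemma w_abs_le {α : Type*} {g : ℕ → α → ℝ} {C : ℝ} (hC : 0 ≤ C)
    (hbd : ∀ n x, |g n x| ≤ C) (N : ℕ) (y : α) :
    |(N : ℝ)⁻¹ * ∑ n ∈ Finset.Icc 1 N, g n y| ≤ C := by
  rcases Nat.eq_zero_or_pos N with h | h
  · simp [h, hC]
  · have h1 : |∑ n ∈ Finset.Icc 1 N, g n y| ≤ (N : ℝ) * C := by
      calc |∑ n ∈ Finset.Icc 1 N, g n y| ≤ ∑ n ∈ Finset.Icc 1 N, |g n y| :=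
            Finset.abs_sum_le_sum_abs _ _
        _ ≤ ∑ n ∈ Finset.Icc 1 N, C := Finset.sum_le_sum fun n _ => hbd n y
        _ = (N : ℝ) * C := by simp [Nat.card_Icc]
    have hN : (0:ℝ) < N := by exact_mod_cast h
    rw [abs_mul, abs_inv, Nat.abs_cast]
    calc (N : ℝ)⁻¹ * |∑ n ∈ Finset.Icc 1 N, g n y|
        ≤ (N : ℝ)⁻¹ * ((N : ℝ) * C) := by
          exact mul_le_mul_of_nonneg_left h1 (by positivity)
      _ = C := by field_simp

/-- Backward direction, abstract form. -/
lemma bwd_aux {α : Type*} [MeasurableSpace α] (μ : Measure α) [IsFiniteMeasure μ]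
    {g : ℕ → α → ℝ} (hmeas : ∀ n, Measurable (g n)) {C : ℝ} (hC : 0 ≤ C)
    (hbd : ∀ n x, |g n x| ≤ C)
    {bbar : α → ℝ} (hbm : Measurable bbar) {C' : ℝ} (hbb : ∀ y, |bbar y| ≤ C')
    (htend : Tendsto (fun N : ℕ =>
        ∫ y, |(N : ℝ)⁻¹ * (∑ n ∈ Finset.Icc 1 N, g n y) - bbar y| ∂μ) atTop (𝓝 0)) :
    ∃ ℓ : ℕ → ℝ,
      (∀ m : ℕ, 1 ≤ m →
        Tendsto (fun N : ℕ => (N : ℝ)⁻¹ *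
            ∑ n ∈ Finset.Icc 1 N, ∫ y, g n y * g m y ∂μ) atTop (𝓝 (ℓ m))) ∧
      ∃ L : ℝ,
        Tendsto (fun N : ℕ => ((N : ℝ) ^ 2)⁻¹ *
            ∑ n ∈ Finset.Icc 1 N, ∑ m ∈ Finset.Icc 1 N, ∫ y, g n y * g m y ∂μ)
          atTop (𝓝 L) ∧
        Tendsto (fun K : ℕ => (K : ℝ)⁻¹ * ∑ m ∈ Finset.Icc 1 K, ℓ m) atTop (𝓝 L) := by
  classical
  set w : ℕ → α → ℝ := fun N y => (N : ℝ)⁻¹ * ∑ n ∈ Finset.Icc 1 N, g n y with hw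
  have hwm : ∀ N, Measurable (w N) := fun N =>
    measurable_const.mul (Finset.measurable_sum _ fun n _ => hmeas n)
  have hwbd : ∀ N y, |w N y| ≤ C := fun N y => w_abs_le hC hbd N y
  have hdm : ∀ N, Measurable fun y => w N y - bbar y := fun N => (hwm N).sub hbm
  have hdbd : ∀ N y, |w N y - bbar y| ≤ C + C' := fun N y =>
    (abs_sub _ _).trans (add_le_add (hwbd N y) (hbb y))
  have hdint : ∀ N, Integrable (fun y => |w N y - bbar y|) μ := fun N =>
    (integrable_of_meas_bound (hdm N) (hdbd N)).abs
  -- key estimate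
  have key : ∀ (r : α → ℝ) (K : ℝ), Measurable r → (∀ x, |r x| ≤ K) → ∀ N : ℕ,
      |(∫ y, w N y * r y ∂μ) - ∫ y, bbar y * r y ∂μ| ≤ K * ∫ y, |w N y - bbar y| ∂μ := by
    intro r K hr hbr N
    have h1 : Integrable (fun y => w N y * r y) μ :=
      integrable_mul_of_bound (hwm N) hr (hwbd N) hbr
    have h2 : Integrable (fun y => bbar y * r y) μ :=
      integrable_mul_of_bound hbm hr hbb hbr
    rw [← integral_sub h1 h2]
    have e : (fun y => w N y * r y - bbar y * r y)
        = fun y => (w N y - bbar y) * r y := by funext y; ring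
    rw [e]
    calc |∫ y, (w N y - bbar y) * r y ∂μ| ≤ ∫ y, |w N y - bbar y| * |r y| ∂μ := by
          simpa [Real.norm_eq_abs] using
            norm_integral_le_integral_norm (fun y => (w N y - bbar y) * r y) (μ := μ)
      _ ≤ ∫ y, K * |w N y - bbar y| ∂μ := by
          refine integral_mono_of_nonneg
            (ae_of_all _ fun y => mul_nonneg (abs_nonneg _) (abs_nonneg _))
            ((hdint N).const_mul K) (ae_of_all _ fun y => ?_)
          show |w N y - bbar y| * |r y| ≤ K * |w N y - bbar y|
          rw [mul_comm]
          exact mul_le_mul_of_nonneg_right (hbr y) (abs_nonneg _)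
      _ = K * ∫ y, |w N y - bbar y| ∂μ := integral_const_mul _ _
  have htend' : ∀ K : ℝ, Tendsto (fun N : ℕ => K * ∫ y, |w N y - bbar y| ∂μ)
      atTop (𝓝 0) := fun K => by simpa using htend.const_mul K
  refine ⟨fun m => ∫ y, bbar y * g m y ∂μ, ?_, ∫ y, bbar y * bbar y ∂μ, ?_, ?_⟩
  · -- condition (i)
    intro m hm
    refine tendsto_of_abs_sub_le (fun N => ?_) (htend' C)
    have hid : (N : ℝ)⁻¹ * ∑ n ∈ Finset.Icc 1 N, ∫ y, g n y * g m y ∂μ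
        = ∫ y, w N y * g m y ∂μ := by
      have e : (fun y => w N y * g m y)
          = fun y => (N : ℝ)⁻¹ * ∑ n ∈ Finset.Icc 1 N, (g n y * g m y) := by
        funext y
        simp only [hw]
        rw [mul_assoc, Finset.sum_mul]
      rw [e, integral_const_mul,
        integral_finset_sum _ fun n _ => integrable_mul_of_bound (hmeas n) (hmeas m)
          (hbd n) (hbd m)]
    rw [hid]
    exact key (g m) C (hmeas m) (hbd m) N
  · -- condition (ii), first limit
    refine tendsto_of_abs_sub_le (fun N => ?_) (htend' (C + C'))
    have hid : ((N : ℝ) ^ 2)⁻¹ *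
        ∑ n ∈ Finset.Icc 1 N, ∑ m ∈ Finset.Icc 1 N, ∫ y, g n y * g m y ∂μ
        = ∫ y, w N y * w N y ∂μ := by
      have e : (fun y => w N y * w N y)
          = fun y => ((N : ℝ) ^ 2)⁻¹ *
              ((∑ n ∈ Finset.Icc 1 N, g n y) * (∑ m ∈ Finset.Icc 1 N, g m y)) := by
        funext y
        simp only [hw]
        ring
      rw [e, integral_const_mul, aux_int_prod μ hmeas hbd]
    rw [hid]
    have flip : ∫ y, bbar y * w N y ∂μ = ∫ y, w N y * bbar y ∂μ := by
      refine integral_congr_ae (ae_of_all _ fun y => mul_comm _ _)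
    calc |(∫ y, w N y * w N y ∂μ) - ∫ y, bbar y * bbar y ∂μ|
        ≤ |(∫ y, w N y * w N y ∂μ) - ∫ y, bbar y * w N y ∂μ|
          + |(∫ y, bbar y * w N y ∂μ) - ∫ y, bbar y * bbar y ∂μ| := abs_sub_le _ _ _
      _ ≤ C * (∫ y, |w N y - bbar y| ∂μ) + C' * ∫ y, |w N y - bbar y| ∂μ := by
          refine add_le_add (key (w N) C (hwm N) (hwbd N) N) ?_
          rw [flip]
          exact key bbar C' hbm hbb N
      _ = (C + C') * ∫ y, |w N y - bbar y| ∂μ := by ring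
  · -- condition (ii), second limit
    refine tendsto_of_abs_sub_le (fun K => ?_) (htend' C')
    have hid : (K : ℝ)⁻¹ * ∑ m ∈ Finset.Icc 1 K, ∫ y, bbar y * g m y ∂μ
        = ∫ y, w K y * bbar y ∂μ := by
      have e : (fun y => w K y * bbar y)
          = fun y => (K : ℝ)⁻¹ * ∑ m ∈ Finset.Icc 1 K, (g m y * bbar y) := by
        funext y
        simp only [hw]
        rw [mul_assoc, Finset.sum_mul]
      rw [e, integral_const_mul,
        integral_finset_sum _ fun m _ => integrable_mul_of_bound (hmeas m) hbm (hbd m) hbb]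
      congr 1
      exact Finset.sum_congr rfl fun m _ =>
        integral_congr_ae (ae_of_all _ fun y => mul_comm _ _)
    rw [hid]
    exact key bbar C' hbm hbb K

open scoped RealInnerProductSpace in
/-- Forward direction, abstract form. -/
lemma fwd_aux {α : Type*} [MeasurableSpace α] (μ : Measure α) [IsFiniteMeasure μ]
    {g : ℕ → α → ℝ} (hmeas : ∀ n, Measurable (g n)) {C : ℝ} (hC : 0 ≤ C)
    (hbd : ∀ n x, |g n x| ≤ C)
    {ℓ : ℕ → ℝ}
    (h1 : ∀ m : ℕ, 1 ≤ m → Tendsto (fun N : ℕ => (N : ℝ)⁻¹ *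
            ∑ n ∈ Finset.Icc 1 N, ∫ y, g n y * g m y ∂μ) atTop (𝓝 (ℓ m)))
    {L : ℝ}
    (h2 : Tendsto (fun N : ℕ => ((N : ℝ) ^ 2)⁻¹ *
            ∑ n ∈ Finset.Icc 1 N, ∑ m ∈ Finset.Icc 1 N, ∫ y, g n y * g m y ∂μ)
          atTop (𝓝 L))
    (h3 : Tendsto (fun K : ℕ => (K : ℝ)⁻¹ * ∑ m ∈ Finset.Icc 1 K, ℓ m) atTop (𝓝 L)) :
    ∃ bbar : α → ℝ, Measurable bbar ∧ (∃ C₀ : ℝ, ∀ y, |bbar y| ≤ C₀) ∧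
      Tendsto (fun N : ℕ =>
          ∫ y, |(N : ℝ)⁻¹ * (∑ n ∈ Finset.Icc 1 N, g n y) - bbar y| ∂μ) atTop (𝓝 0) := by
  classical
  set w : ℕ → α → ℝ := fun N y => (N : ℝ)⁻¹ * ∑ n ∈ Finset.Icc 1 N, g n y with hw
  have hwm : ∀ N, Measurable (w N) := fun N =>
    measurable_const.mul (Finset.measurable_sum _ fun n _ => hmeas n)
  have hwbd : ∀ N y, |w N y| ≤ C := fun N y => w_abs_le hC hbd N y
  have hw2 : ∀ N, MemLp (w N) 2 μ := fun N =>
    MemLp.of_bound (hwm N).aestronglyMeasurable C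
      (ae_of_all _ fun y => by rw [Real.norm_eq_abs]; exact hwbd N y)
  set v : ℕ → Lp ℝ 2 μ := fun N => (hw2 N).toLp (w N) with hv
  have hvcoe : ∀ N, (v N : α → ℝ) =ᵐ[μ] w N := fun N => (hw2 N).coeFn_toLp
  -- inner products
  have hinner : ∀ N K : ℕ, ⟪v N, v K⟫
      = (N : ℝ)⁻¹ * (K : ℝ)⁻¹ *
        ∑ n ∈ Finset.Icc 1 N, ∑ m ∈ Finset.Icc 1 K, ∫ y, g n y * g m y ∂μ := by
    intro N K
    have e1 : ⟪v N, v K⟫ = ∫ a, w N a * w K a ∂μ := by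
      rw [MeasureTheory.L2.inner_def]
      refine integral_congr_ae ?_
      filter_upwards [hvcoe N, hvcoe K] with a ha hb
      rw [ha, hb, RCLike.inner_apply]
      simp
      ring
    rw [e1]
    have e2 : (fun a => w N a * w K a)
        = fun a => ((N : ℝ)⁻¹ * (K : ℝ)⁻¹) *
            ((∑ n ∈ Finset.Icc 1 N, g n a) * (∑ m ∈ Finset.Icc 1 K, g m a)) := by
      funext a
      simp only [hw]
      ring
    rw [e2, integral_const_mul, aux_int_prod μ hmeas hbd]
  have h2' : Tendsto (fun N => ‖v N‖ ^ 2) atTop (𝓝 L) := by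
    refine h2.congr fun N => ?_
    rw [← real_inner_self_eq_norm_sq, hinner N N, sq, mul_inv]
  have hCK : ∀ K : ℕ, 1 ≤ K → Tendsto (fun N => ⟪v N, v K⟫) atTop
      (𝓝 ((K : ℝ)⁻¹ * ∑ m ∈ Finset.Icc 1 K, ℓ m)) := by
    intro K hK
    have base : Tendsto (fun N : ℕ => (K : ℝ)⁻¹ * ∑ m ∈ Finset.Icc 1 K,
        ((N : ℝ)⁻¹ * ∑ n ∈ Finset.Icc 1 N, ∫ y, g n y * g m y ∂μ)) atTop
        (𝓝 ((K : ℝ)⁻¹ * ∑ m ∈ Finset.Icc 1 K, ℓ m)) :=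
      (tendsto_finset_sum _ fun m hm => h1 m (Finset.mem_Icc.mp hm).1).const_mul _
    refine base.congr fun N => ?_
    rw [hinner N K]
    simp only [← Finset.mul_sum]
    rw [Finset.sum_comm]
    ring
  -- Cauchy sequence in L²
  have hcauchy : CauchySeq v := by
    rw [Metric.cauchySeq_iff]
    intro ε hε
    have hδ : (0:ℝ) < ε ^ 2 / 16 := by positivity
    obtain ⟨K1, hK1⟩ := (Metric.tendsto_atTop.mp h2') _ hδ
    obtain ⟨K2, hK2⟩ := (Metric.tendsto_atTop.mp h3) _ hδ
    set K := max 1 (max K1 K2) with hKdef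
    have hKa : |‖v K‖ ^ 2 - L| < ε ^ 2 / 16 := by
      have := hK1 K (le_trans (le_max_left K1 K2) (le_max_right 1 _))
      rwa [Real.dist_eq] at this
    have hKb : |(K : ℝ)⁻¹ * ∑ m ∈ Finset.Icc 1 K, ℓ m - L| < ε ^ 2 / 16 := by
      have := hK2 K (le_trans (le_max_right K1 K2) (le_max_right 1 _))
      rwa [Real.dist_eq] at this
    have hlim : Tendsto (fun N => ‖v N - v K‖ ^ 2) atTop
        (𝓝 (L - 2 * ((K : ℝ)⁻¹ * ∑ m ∈ Finset.Icc 1 K, ℓ m) + ‖v K‖ ^ 2)) := by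
      have := (h2'.sub ((hCK K (le_max_left 1 _)).const_mul 2)).add_const (‖v K‖ ^ 2)
      refine this.congr fun N => ?_
      rw [norm_sub_sq_real]
    obtain ⟨N₀, hN₀⟩ := (Metric.tendsto_atTop.mp hlim) _ hδ
    refine ⟨N₀, fun m hm n hn => ?_⟩
    have hb1 : ∀ j, N₀ ≤ j → ‖v j - v K‖ < ε / 2 := by
      intro j hj
      have h := hN₀ j hj
      rw [Real.dist_eq] at h
      have h' := abs_lt.mp h
      have ha := abs_lt.mp hKa
      have hb := abs_lt.mp hKb
      nlinarith [norm_nonneg (v j - v K), hε]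
    calc dist (v m) (v n) ≤ dist (v m) (v K) + dist (v K) (v n) := dist_triangle _ _ _
      _ < ε / 2 + ε / 2 :=
          add_lt_add (by rw [dist_eq_norm]; exact hb1 m hm)
            (by rw [dist_comm, dist_eq_norm]; exact hb1 n hn)
      _ = ε := by ring
  obtain ⟨vlim, hvlim⟩ := cauchySeq_tendsto_of_complete hcauchy
  have hnv : Tendsto (fun N => ‖v N - vlim‖) atTop (𝓝 0) :=
    (tendsto_iff_norm_sub_tendsto_zero).mp hvlim
  -- L¹ convergence to vlim
  have hgoal0 : Tendsto (fun N => ∫ y, |w N y - (vlim : α → ℝ) y| ∂μ) atTop (𝓝 0) := by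
    set D : ℝ := ((μ Set.univ) ^ ((1:ℝ)/1 - 1/2)).toReal with hD
    have hbound : ∀ N, ∫ y, |w N y - (vlim : α → ℝ) y| ∂μ ≤ ‖v N - vlim‖ * D := by
      intro N
      have hae : (fun y => w N y - (vlim : α → ℝ) y) =ᵐ[μ] ((v N - vlim : Lp ℝ 2 μ) : α → ℝ) := by
        filter_upwards [hvcoe N, Lp.coeFn_sub (v N) vlim] with a ha hb
        rw [hb]
        simp [ha]
      have hasm : AEStronglyMeasurable (fun y => w N y - (vlim : α → ℝ) y) μ :=
        (hwm N).aestronglyMeasurable.sub (Lp.aestronglyMeasurable vlim)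
      have e0 : ∫ y, |w N y - (vlim : α → ℝ) y| ∂μ
          = (eLpNorm (fun y => w N y - (vlim : α → ℝ) y) 1 μ).toReal := by
        rw [eLpNorm_one_eq_lintegral_enorm, ← integral_norm_eq_lintegral_enorm hasm]
        simp [Real.norm_eq_abs]
      have e2 : eLpNorm (fun y => w N y - (vlim : α → ℝ) y) 2 μ
          = ENNReal.ofReal ‖v N - vlim‖ := by
        rw [eLpNorm_congr_ae hae, Lp.norm_def,
          ENNReal.ofReal_toReal (Lp.eLpNorm_ne_top _)]
      have e1 : eLpNorm (fun y => w N y - (vlim : α → ℝ) y) 1 μ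
          ≤ ENNReal.ofReal ‖v N - vlim‖ * (μ Set.univ) ^ ((1:ℝ)/1 - 1/2) := by
        rw [← e2]
        have h := eLpNorm_le_eLpNorm_mul_rpow_measure_univ (p := 1) (q := 2)
          (by norm_num) hasm
        simpa using h
      calc ∫ y, |w N y - (vlim : α → ℝ) y| ∂μ
          = (eLpNorm (fun y => w N y - (vlim : α → ℝ) y) 1 μ).toReal := e0
        _ ≤ (ENNReal.ofReal ‖v N - vlim‖ * (μ Set.univ) ^ ((1:ℝ)/1 - 1/2)).toReal := by
            refine ENNReal.toReal_mono ?_ e1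
            exact ENNReal.mul_ne_top ENNReal.ofReal_ne_top
              (ENNReal.rpow_ne_top_of_nonneg (by norm_num) (measure_ne_top μ _))
        _ = ‖v N - vlim‖ * D := by
            rw [ENNReal.toReal_mul, ENNReal.toReal_ofReal (norm_nonneg _)]
    refine squeeze_zero (fun N => integral_nonneg fun y => abs_nonneg _) hbound ?_
    simpa using hnv.mul_const D
  -- construct the bounded measurable representative
  have hvm := Lp.aestronglyMeasurable vlim
  set u : α → ℝ := hvm.mk _ with hu
  have hum : Measurable u := hvm.stronglyMeasurable_mk.measurable
  have huq : (vlim : α → ℝ) =ᵐ[μ] u := hvm.ae_eq_mk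
  refine ⟨fun y => max (-C) (min C (u y)), measurable_const.max (measurable_const.min hum),
    ⟨C, fun y => abs_le.mpr ⟨le_max_left _ _,
      max_le (neg_le_self hC) (min_le_left _ _)⟩⟩, ?_⟩
  -- transfer the L¹ convergence through the clamp
  have hclamp : ∀ N y, |w N y - max (-C) (min C (u y))| ≤ |w N y - u y| := by
    intro N y
    have hwy : w N y = max (-C) (min C (w N y)) := by
      have h := abs_le.mp (hwbd N y)
      rw [min_eq_right h.2, max_eq_right h.1]
    calc |w N y - max (-C) (min C (u y))|
        = |max (-C) (min C (w N y)) - max (-C) (min C (u y))| := by rw [← hwy]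
      _ ≤ |w N y - u y| := clamp_abs_sub_le _ _ _
  have hint_u : ∀ N, Integrable (fun y => |w N y - u y|) μ := by
    intro N
    have hi1 : Integrable (vlim : α → ℝ) μ :=
      (Lp.memLp vlim).integrable (by norm_num)
    have hi2 : Integrable u μ := hi1.congr huq
    exact ((integrable_of_meas_bound (hwm N) (hwbd N)).sub hi2).abs
  have hmain : Tendsto (fun N => ∫ y, |w N y - u y| ∂μ) atTop (𝓝 0) := by
    refine hgoal0.congr fun N => ?_
    refine integral_congr_ae ?_
    filter_upwards [huq] with y hy
    rw [hy]
  refine squeeze_zero (fun N => integral_nonneg fun y => abs_nonneg _) (fun N => ?_) hmain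
  exact integral_mono_of_nonneg (ae_of_all _ fun y => abs_nonneg _) (hint_u N)
    (ae_of_all _ fun y => hclamp N y)

/-- Weak (S)-convergence of a sequence `(U_n)_{n ≥ 1}` of measurable functions `Q → ℝ^D`:
for every `b ∈ C_c(ℝ^D)`, (i) the correlation limits
`ℓ m = lim_N (1/N) ∑_{n=1}^N ∫_Q b(U_n) b(U_m)` exist for every fixed `m ≥ 1`, and
(ii) `lim_N (1/N²) ∑_{n,m=1}^N ∫_Q b(U_n) b(U_m) = lim_M (1/M) ∑_{m=1}^M ℓ m`
(both limits existing). -/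
def WeaklySConv {M D : ℕ} (Q : Set (Fin M → ℝ))
    (U : ℕ → (Fin M → ℝ) → EuclideanSpace ℝ (Fin D)) : Prop :=
  ∀ b : EuclideanSpace ℝ (Fin D) → ℝ, Continuous b → HasCompactSupport b →
    ∃ ℓ : ℕ → ℝ,
      (∀ m : ℕ, 1 ≤ m →
        Tendsto (fun N : ℕ => (N : ℝ)⁻¹ *
            ∑ n ∈ Finset.Icc 1 N, ∫ y in Q, b (U n y) * b (U m y)) atTop (𝓝 (ℓ m))) ∧
      ∃ L : ℝ,
        Tendsto (fun N : ℕ => ((N : ℝ) ^ 2)⁻¹ *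
            ∑ n ∈ Finset.Icc 1 N, ∑ m ∈ Finset.Icc 1 N, ∫ y in Q, b (U n y) * b (U m y))
          atTop (𝓝 L) ∧
        Tendsto (fun K : ℕ => (K : ℝ)⁻¹ * ∑ m ∈ Finset.Icc 1 K, ℓ m) atTop (𝓝 L)

/-- Theorem 2.1 (i): `(U_n)` is weakly (S)-convergent iff for every
`b ∈ C_c(ℝ^D)` the Cesàro averages `(1/N) ∑_{n=1}^N b(U_n)` converge strongly in `L¹(Q)`
to some `b̄ ∈ L^∞(Q)`. -/
theorem stmt3 {M D : ℕ} (Q : Set (Fin M → ℝ)) (hQm : MeasurableSet Q)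
    (hQfin : volume Q < ⊤)
    (U : ℕ → (Fin M → ℝ) → EuclideanSpace ℝ (Fin D)) (hU : ∀ n, Measurable (U n)) :
    WeaklySConv Q U ↔
      (∀ b : EuclideanSpace ℝ (Fin D) → ℝ, Continuous b → HasCompactSupport b →
        ∃ bbar : (Fin M → ℝ) → ℝ, Measurable bbar ∧ (∃ C : ℝ, ∀ y, |bbar y| ≤ C) ∧
          Tendsto (fun N : ℕ =>
              ∫ y in Q, |(N : ℝ)⁻¹ * (∑ n ∈ Finset.Icc 1 N, b (U n y)) - bbar y|)
            atTop (𝓝 0)) := by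
  haveI : IsFiniteMeasure (volume.restrict Q) :=
    ⟨by rwa [Measure.restrict_apply_univ]⟩
  constructor
  · intro hS b hbc hbs
    obtain ⟨ℓ, h1, L, h2, h3⟩ := hS b hbc hbs
    obtain ⟨C0, hC0⟩ := hbs.exists_bound_of_continuous hbc
    have hbd : ∀ (n : ℕ) (y : Fin M → ℝ), |b (U n y)| ≤ max C0 0 := fun n y => by
      rw [← Real.norm_eq_abs]
      exact (hC0 _).trans (le_max_left _ _)
    exact fwd_aux (volume.restrict Q)
      (fun n => hbc.measurable.comp (hU n)) (le_max_right C0 0) hbd h1 h2 h3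
  · intro h b hbc hbs
    obtain ⟨bbar, hbm, ⟨C', hC'⟩, htend⟩ := h b hbc hbs
    obtain ⟨C0, hC0⟩ := hbs.exists_bound_of_continuous hbc
    have hbd : ∀ (n : ℕ) (y : Fin M → ℝ), |b (U n y)| ≤ max C0 0 := fun n y => by
      rw [← Real.norm_eq_abs]
      exact (hC0 _).trans (le_max_left _ _)
    exact bwd_aux (volume.restrict Q)
      (fun n => hbc.measurable.comp (hU n)) (le_max_right C0 0) hbd hbm hC' htend
end
end

section
/- Suppose (U_n)_{n≥1} is weakly asymptotically stationary, i.e., for every b ∈ C_c(ℝ^D): (A2) for every fixed m, the limit lim_{N→∞} (1/N) Σ_{n=1}^N ∫_Q b(U_n) b(U_m) dy exists; and (A3) there exists a function ω(b,·) with ω(b,k) → 0 as k → ∞ such that |∫_Q [b(U_{k_1}) b(U_{k_2}) − b(U_{k_1+n}) b(U_{k_2+n})] dy| ≤ ω(b,k) for all 1 ≤ k ≤ k_1 ≤ k_2 and all n ≥ 0. Then (U_n) is weakly (S)-convergent; in particular, for every b ∈ C_c(ℝ^D) there exists \bar{b} ∈ L^∞(Q) such that (1/N) Σ_{n=1}^N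 b(U_n) → \bar{b} strongly in L¹(Q) as N → ∞. -/
open MeasureTheory Filter Topology

noncomputable section

set_option maxHeartbeats 1000000


lemma cesaro_shift (u : ℕ → ℝ) (l : ℝ) (r : ℕ)
    (h : Tendsto (fun N : ℕ => (N:ℝ)⁻¹ * ∑ n ∈ Finset.Icc 1 N, u n) atTop (𝓝 l)) :
    Tendsto (fun N : ℕ => (N:ℝ)⁻¹ * ∑ n ∈ Finset.Icc 1 N, u (n + r)) atTop (𝓝 l) := by
  have hsum : ∀ N : ℕ, ∑ n ∈ Finset.Icc 1 N, u (n + r)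
      = ∑ n ∈ Finset.Icc 1 (N + r), u n - ∑ n ∈ Finset.Icc 1 r, u n := by
    intro N
    have h1 : ∑ n ∈ Finset.Icc 1 N, u (n + r) = ∑ n ∈ Finset.Ioc r (N + r), u n := by
      apply Finset.sum_nbij' (fun n => n + r) (fun n => n - r) <;>
        (intros; simp_all [Finset.mem_Icc, Finset.mem_Ioc]) <;> omega
    have h2 : (∑ n ∈ Finset.Ioc 0 r, u n) + ∑ n ∈ Finset.Ioc r (N + r), u n
        = ∑ n ∈ Finset.Ioc 0 (N + r), u n := Finset.sum_Ioc_consecutive u (by omega) (by omega)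
    have e1 : Finset.Icc 1 (N+r) = Finset.Ioc 0 (N+r) := Finset.Icc_add_one_left_eq_Ioc 0 (N+r)
    have e2 : Finset.Icc 1 r = Finset.Ioc 0 r := Finset.Icc_add_one_left_eq_Ioc 0 r
    rw [h1, e1, e2]
    linarith [h2]
  have h2 : Tendsto (fun N : ℕ => (((N + r : ℕ) : ℝ))⁻¹ * ∑ n ∈ Finset.Icc 1 (N + r), u n)
      atTop (𝓝 l) := h.comp (tendsto_add_atTop_nat r)
  have h3 : Tendsto (fun N : ℕ => (N:ℝ)⁻¹ * ((N + r : ℕ) : ℝ)) atTop (𝓝 1) := by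
    have : Tendsto (fun N : ℕ => 1 + (r:ℝ) * (N:ℝ)⁻¹) atTop (𝓝 (1 + (r:ℝ) * 0)) :=
      tendsto_const_nhds.add (tendsto_const_nhds.mul tendsto_inv_atTop_nhds_zero_nat)
    rw [mul_zero, add_zero] at this
    apply this.congr'
    filter_upwards [eventually_ge_atTop 1] with N hN
    have hN0 : (N:ℝ) ≠ 0 := by positivity
    push_cast
    field_simp
  have h4 : Tendsto (fun N : ℕ => (N:ℝ)⁻¹ * ∑ n ∈ Finset.Icc 1 (N + r), u n) atTop (𝓝 l) := by
    have := h3.mul h2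
    rw [one_mul] at this
    apply this.congr'
    filter_upwards [eventually_ge_atTop 1] with N hN
    have hN0 : ((N:ℝ) + r) ≠ 0 := by positivity
    push_cast
    field_simp
  have h5 : Tendsto (fun N : ℕ => (N:ℝ)⁻¹ * ∑ n ∈ Finset.Icc 1 r, u n) atTop (𝓝 0) := by
    simpa using tendsto_inv_atTop_nhds_zero_nat.mul_const (∑ n ∈ Finset.Icc 1 r, u n)
  have := h4.sub h5
  rw [sub_zero] at this
  apply this.congr
  intro N
  rw [hsum, mul_sub]

lemma abstract_key (a : ℕ → ℕ → ℝ) (B : ℝ)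
    (hbound : ∀ n m, |a n m| ≤ B)
    (hsymm : ∀ n m, a n m = a m n)
    (ℓ : ℕ → ℝ)
    (hA2 : ∀ m, 1 ≤ m →
      Tendsto (fun N : ℕ => (N:ℝ)⁻¹ * ∑ n ∈ Finset.Icc 1 N, a n m) atTop (𝓝 (ℓ m)))
    (ω : ℕ → ℝ) (hω : Tendsto ω atTop (𝓝 0))
    (hA3 : ∀ k k₁ k₂ : ℕ, 1 ≤ k → k ≤ k₁ → k₁ ≤ k₂ → ∀ n,
      |a k₁ k₂ - a (k₁+n) (k₂+n)| ≤ ω k) :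
    ∃ L : ℝ, Tendsto ℓ atTop (𝓝 L) ∧
      ∀ ε : ℝ, 0 < ε → ∃ N₀ : ℕ, 1 ≤ N₀ ∧ ∀ N N' : ℕ, N₀ ≤ N → N₀ ≤ N' →
        |((N:ℝ) * (N':ℝ))⁻¹ * ∑ n ∈ Finset.Icc 1 N, ∑ m ∈ Finset.Icc 1 N', a n m - L| ≤ ε := by
  have hB0 : 0 ≤ B := le_trans (abs_nonneg _) (hbound 0 0)
  have hω0 : ∀ k, 1 ≤ k → 0 ≤ ω k := by
    intro k hk
    have := hA3 k k k hk le_rfl le_rfl 0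
    simpa using this
  -- bound on averages
  have hsumB : ∀ (s : Finset ℕ) (f : ℕ → ℝ), (∀ i ∈ s, |f i| ≤ B) →
      |∑ i ∈ s, f i| ≤ B * s.card := by
    intro s f hf
    calc |∑ i ∈ s, f i| ≤ ∑ i ∈ s, |f i| := Finset.abs_sum_le_sum_abs _ _
      _ ≤ ∑ _i ∈ s, B := Finset.sum_le_sum hf
      _ = B * s.card := by rw [Finset.sum_const, nsmul_eq_mul, mul_comm]
  have hcard : ∀ N : ℕ, (Finset.Icc 1 N).card = N := by
    intro N; rw [Nat.card_Icc]; omega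
  have hℓB : ∀ m, 1 ≤ m → |ℓ m| ≤ B := by
    intro m hm
    apply le_of_tendsto (hA2 m hm).abs
    filter_upwards [eventually_ge_atTop 1] with N hN
    have h1 : |∑ n ∈ Finset.Icc 1 N, a n m| ≤ B * N := by
      have := hsumB (Finset.Icc 1 N) (fun n => a n m) (fun i _ => hbound i m)
      rwa [hcard] at this
    have hN0 : (0:ℝ) < N := by exact_mod_cast hN
    rw [abs_mul, abs_inv, Nat.abs_cast]
    calc (N:ℝ)⁻¹ * |∑ n ∈ Finset.Icc 1 N, a n m| ≤ (N:ℝ)⁻¹ * (B * N) := by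
          apply mul_le_mul_of_nonneg_left h1 (by positivity)
      _ = B := by field_simp
  -- sum of indicator bound
  have hsum_ind : ∀ (k : ℕ) (c : ℝ), 0 ≤ c → ∀ s : Finset ℕ,
      ∑ m ∈ s, (if m < k then c else 0) ≤ c * k := by
    intro k c hc s
    rw [← Finset.sum_filter]
    rw [Finset.sum_const, nsmul_eq_mul]
    have hsub : s.filter (· < k) ⊆ Finset.range k := by
      intro x hx
      simp only [Finset.mem_filter] at hx
      exact Finset.mem_range.mpr hx.2
    have := Finset.card_le_card hsub
    rw [Finset.card_range] at this
    calc ((s.filter (· < k)).card : ℝ) * c ≤ (k:ℝ) * c := by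
          apply mul_le_mul_of_nonneg_right _ hc
          exact_mod_cast this
      _ = c * k := by ring
  -- step: |ℓ m - ℓ k| ≤ ω k for 1 ≤ k ≤ m
  have hdiff : ∀ k m, 1 ≤ k → k ≤ m → |ℓ m - ℓ k| ≤ ω k := by
    intro k m hk hkm
    set r := m - k with hr
    have hm1 : 1 ≤ m := le_trans hk hkm
    have hm' := cesaro_shift (fun n => a n m) (ℓ m) r (hA2 m hm1)
    have hv : Tendsto (fun N : ℕ => (N:ℝ)⁻¹ *
        ∑ n ∈ Finset.Icc 1 N, (a (n + r) m - a n k)) atTop (𝓝 (ℓ m - ℓ k)) := by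
      have := hm'.sub (hA2 k hk)
      apply this.congr
      intro N
      rw [Finset.sum_sub_distrib, mul_sub]
    have hterm : ∀ n, 1 ≤ n → |a (n + r) m - a n k| ≤ ω k + (if n < k then 2*B else 0) := by
      intro n _
      by_cases hn : k ≤ n
      · have h3 := hA3 k k n hk le_rfl hn r
        have hkr : k + r = m := by omega
        rw [hkr] at h3
        have e1 : a k n = a n k := hsymm k n
        have e2 : a m (n + r) = a (n + r) m := hsymm m (n + r)
        rw [e1, e2] at h3
        rw [abs_sub_comm] at h3
        simp only [if_neg (not_lt.mpr hn), add_zero]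
        exact h3
      · push_neg at hn
        rw [if_pos hn]
        calc |a (n + r) m - a n k| ≤ |a (n + r) m| + |a n k| := abs_sub _ _
          _ ≤ B + B := add_le_add (hbound _ _) (hbound _ _)
          _ ≤ ω k + 2*B := by linarith [hω0 k hk]
    have hvb : ∀ᶠ N : ℕ in atTop, |(N:ℝ)⁻¹ *
        ∑ n ∈ Finset.Icc 1 N, (a (n + r) m - a n k)| ≤ ω k + 2*B*k * (N:ℝ)⁻¹ := by
      filter_upwards [eventually_ge_atTop 1] with N hN
      have hN0 : (0:ℝ) < N := by exact_mod_cast hN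
      rw [abs_mul, abs_inv, Nat.abs_cast]
      have h1 : |∑ n ∈ Finset.Icc 1 N, (a (n + r) m - a n k)| ≤
          ω k * N + 2*B*k := by
        calc |∑ n ∈ Finset.Icc 1 N, (a (n + r) m - a n k)|
            ≤ ∑ n ∈ Finset.Icc 1 N, |a (n + r) m - a n k| := Finset.abs_sum_le_sum_abs _ _
          _ ≤ ∑ n ∈ Finset.Icc 1 N, (ω k + (if n < k then 2*B else 0)) := by
              apply Finset.sum_le_sum
              intro i hi
              exact hterm i (Finset.mem_Icc.mp hi).1
          _ = ω k * N + ∑ n ∈ Finset.Icc 1 N, (if n < k then 2*B else 0) := by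
              rw [Finset.sum_add_distrib, Finset.sum_const, hcard, nsmul_eq_mul, mul_comm]
          _ ≤ ω k * N + 2*B*k := by
              have := hsum_ind k (2*B) (by linarith) (Finset.Icc 1 N)
              linarith
      calc (N:ℝ)⁻¹ * |∑ n ∈ Finset.Icc 1 N, (a (n + r) m - a n k)|
          ≤ (N:ℝ)⁻¹ * (ω k * N + 2*B*k) := mul_le_mul_of_nonneg_left h1 (by positivity)
        _ = ω k + 2*B*k * (N:ℝ)⁻¹ := by field_simp
    have hrhs : Tendsto (fun N : ℕ => ω k + 2*B*k * (N:ℝ)⁻¹) atTop (𝓝 (ω k)) := by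
      have : Tendsto (fun N : ℕ => ω k + 2*B*k * (N:ℝ)⁻¹) atTop (𝓝 (ω k + 2*B*k * 0)) :=
        tendsto_const_nhds.add (tendsto_const_nhds.mul tendsto_inv_atTop_nhds_zero_nat)
      simpa using this
    exact le_of_tendsto_of_tendsto hv.abs hrhs hvb
  -- ℓ is Cauchy
  have hcauchy : CauchySeq ℓ := by
    rw [Metric.cauchySeq_iff']
    intro ε hε
    obtain ⟨K, hK⟩ := Metric.tendsto_atTop.mp hω ε hε
    refine ⟨max K 1, ?_⟩
    intro n hn
    have hk1 : 1 ≤ max K 1 := le_max_right _ _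
    have := hdiff (max K 1) n hk1 hn
    have hωk : ω (max K 1) < ε := by
      have := hK (max K 1) (le_max_left _ _)
      rw [Real.dist_eq, sub_zero] at this
      exact lt_of_abs_lt this
    calc dist (ℓ n) (ℓ (max K 1)) = |ℓ n - ℓ (max K 1)| := Real.dist_eq _ _
      _ ≤ ω (max K 1) := this
      _ < ε := hωk
  obtain ⟨L, hTL⟩ := cauchySeq_tendsto_of_complete hcauchy
  have hLk : ∀ k, 1 ≤ k → |ℓ k - L| ≤ ω k := by
    intro k hk
    have h1 : Tendsto (fun m : ℕ => |ℓ k - ℓ m|) atTop (𝓝 |ℓ k - L|) :=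
      (tendsto_const_nhds.sub hTL).abs
    apply le_of_tendsto h1
    filter_upwards [eventually_ge_atTop k] with m hm
    rw [abs_sub_comm]
    exact hdiff k m hk hm
  refine ⟨L, hTL, ?_⟩
  intro ε hε
  -- choose k with ω k ≤ ε/8
  obtain ⟨K, hK⟩ := Metric.tendsto_atTop.mp hω (ε/8) (by positivity)
  set k := max K 1 with hkdef
  have hk1 : 1 ≤ k := le_max_right _ _
  have hωk : ω k ≤ ε/8 := by
    have := hK k (le_max_left _ _)
    rw [Real.dist_eq, sub_zero] at this
    exact le_of_lt (lt_of_abs_lt this)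
  set g : ℕ → ℝ := fun d => a k (k + d) with hgdef
  set lam := ℓ k with hlamdef
  set G : ℕ → ℝ := fun T => ∑ d ∈ Finset.Icc 1 T, g d with hGdef
  have hgB : ∀ d, |g d| ≤ B := fun d => hbound _ _
  have hGB : ∀ T : ℕ, |G T| ≤ B * T := by
    intro T
    have := hsumB (Finset.Icc 1 T) g (fun i _ => hgB i)
    rwa [hcard] at this
  have hlamB : |lam| ≤ B := hℓB k hk1
  -- Cesàro limit of g
  have hGlim : Tendsto (fun T : ℕ => (T:ℝ)⁻¹ * G T) atTop (𝓝 lam) := by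
    have := cesaro_shift (fun n => a n k) lam k (hA2 k hk1)
    apply this.congr
    intro T
    congr 1
    apply Finset.sum_congr rfl
    intro d _
    show a (d + k) k = g d
    rw [hsymm, hgdef]
    simp [add_comm]
  obtain ⟨T₀', hT₀'⟩ := Metric.tendsto_atTop.mp hGlim (ε/8) (by positivity)
  set T₀ := max T₀' 1 with hT₀def
  have hT₀1 : 1 ≤ T₀ := le_max_right _ _
  have hGest : ∀ T : ℕ, T₀ ≤ T → |G T - lam * T| ≤ ε/8 * T := by
    intro T hT
    have h1 := hT₀' T (le_trans (le_max_left _ _) hT)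
    rw [Real.dist_eq] at h1
    have hT1 : (1:ℕ) ≤ T := le_trans hT₀1 hT
    have hTpos : (0:ℝ) < T := by exact_mod_cast hT1
    have h2 : |G T - lam * T| = T * |(T:ℝ)⁻¹ * G T - lam| := by
      have e : (T:ℝ) * ((T:ℝ)⁻¹ * G T - lam) = G T - lam * T := by
        rw [mul_sub, ← mul_assoc, mul_inv_cancel₀ hTpos.ne', one_mul, mul_comm (T:ℝ)]
      rw [← e, abs_mul, abs_of_pos hTpos]
    rw [h2]
    calc (T:ℝ) * |(T:ℝ)⁻¹ * G T - lam| ≤ (T:ℝ) * (ε/8) :=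
          mul_le_mul_of_nonneg_left (le_of_lt h1) (le_of_lt hTpos)
      _ = ε/8 * T := by ring
  set c₀ : ℝ := 2*B*T₀ with hc₀def
  have hc₀0 : 0 ≤ c₀ := by positivity
  have hG : ∀ T : ℕ, |G T - lam * T| ≤ ε/8 * T + c₀ := by
    intro T
    by_cases hT : T₀ ≤ T
    · have := hGest T hT
      linarith
    · push_neg at hT
      have h1 : |G T - lam * T| ≤ 2*B*T := by
        calc |G T - lam * T| ≤ |G T| + |lam * T| := abs_sub _ _
          _ ≤ B*T + B*T := by
              refine add_le_add (hGB T) ?_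
              rw [abs_mul, Nat.abs_cast]
              apply mul_le_mul_of_nonneg_right hlamB (by positivity)
          _ = 2*B*T := by ring
      have hTT : (T:ℝ) ≤ T₀ := by exact_mod_cast le_of_lt hT
      have : (2*B)*(T:ℝ) ≤ 2*B*T₀ := by
        apply mul_le_mul_of_nonneg_left hTT (by positivity)
      have hεT : 0 ≤ ε/8 * T := by positivity
      rw [hc₀def]
      linarith
  -- per-term estimate
  have hpt2 : ∀ n m, k ≤ n → n ≤ m → |a n m - g (m - n)| ≤ ω k := by
    intro n m hkn hnm
    have h3 := hA3 k k (k + (m - n)) hk1 le_rfl (Nat.le_add_right _ _) (n - k)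
    have e1 : k + (n - k) = n := by omega
    have e2 : k + (m - n) + (n - k) = m := by omega
    rw [e1, e2] at h3
    rw [abs_sub_comm]
    exact h3
  have hpt1 : ∀ n m, k ≤ m → m ≤ n → |a n m - g (n - m)| ≤ ω k := by
    intro n m hkm hmn
    rw [hsymm n m]
    exact hpt2 m n hkm hmn
  -- row decomposition
  have hrow : ∀ n N' : ℕ, 1 ≤ n → n ≤ N' →
      ∑ m ∈ Finset.Icc 1 N', a n m =
        (∑ m ∈ Finset.Icc 1 (n-1), a n m) + a n n + ∑ m ∈ Finset.Ioc n N', a n m := by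
    intro n N' h1 h2
    obtain ⟨p, rfl⟩ : ∃ p, n = p + 1 := ⟨n - 1, by omega⟩
    have e0 : Finset.Icc 1 N' = Finset.Ioc 0 N' := Finset.Icc_add_one_left_eq_Ioc 0 N'
    have e1 : Finset.Icc 1 ((p+1)-1) = Finset.Ioc 0 p := by
      rw [Nat.add_sub_cancel]; exact Finset.Icc_add_one_left_eq_Ioc 0 p
    rw [e0, e1, ← Finset.sum_Ioc_consecutive (fun m => a (p+1) m) (Nat.zero_le (p+1)) h2,
      Finset.sum_Ioc_succ_top (Nat.zero_le p)]
  have hre1 : ∀ n : ℕ, 1 ≤ n → G (n-1) = ∑ m ∈ Finset.Icc 1 (n-1), g (n - m) := by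
    intro n h1
    refine Finset.sum_nbij' (fun d => n - d) (fun m => n - m) ?_ ?_ ?_ ?_ ?_ <;>
      intro x hx <;> simp only [Finset.mem_Icc] at hx ⊢
    · omega
    · omega
    · omega
    · omega
    · congr 1; omega
  have hre2 : ∀ n N' : ℕ, G (N' - n) = ∑ m ∈ Finset.Ioc n N', g (m - n) := by
    intro n N'
    refine Finset.sum_nbij' (fun d => d + n) (fun m => m - n) ?_ ?_ ?_ ?_ ?_ <;>
      intro x hx <;>
        simp only [Finset.mem_Icc, Finset.mem_Ioc] at hx ⊢
    · omega
    · omega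
    · omega
    · omega
    · congr 1; omega
  have hrowest : ∀ n N' : ℕ, k ≤ n → n ≤ N' →
      |(∑ m ∈ Finset.Icc 1 N', a n m) - (G (n-1) + g 0 + G (N'-n))| ≤ N' * ω k + 2*B*k := by
    intro n N' hkn hnN
    have h1 : 1 ≤ n := le_trans hk1 hkn
    rw [hrow n N' h1 hnN, hre1 n h1, hre2 n N']
    have e : (∑ m ∈ Finset.Icc 1 (n-1), a n m) + a n n + (∑ m ∈ Finset.Ioc n N', a n m)
        - ((∑ m ∈ Finset.Icc 1 (n-1), g (n - m)) + g 0 + ∑ m ∈ Finset.Ioc n N', g (m - n))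
        = (∑ m ∈ Finset.Icc 1 (n-1), (a n m - g (n - m))) + (a n n - g 0)
          + ∑ m ∈ Finset.Ioc n N', (a n m - g (m - n)) := by
      rw [Finset.sum_sub_distrib, Finset.sum_sub_distrib]; ring
    rw [e]
    have b1 : |∑ m ∈ Finset.Icc 1 (n-1), (a n m - g (n - m))|
        ≤ ((n-1:ℕ):ℝ) * ω k + 2*B*k := by
      calc |∑ m ∈ Finset.Icc 1 (n-1), (a n m - g (n - m))|
          ≤ ∑ m ∈ Finset.Icc 1 (n-1), |a n m - g (n - m)| := Finset.abs_sum_le_sum_abs _ _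
        _ ≤ ∑ m ∈ Finset.Icc 1 (n-1), (ω k + (if m < k then 2*B else 0)) := by
            apply Finset.sum_le_sum
            intro m hm
            obtain ⟨hm1, hm2⟩ := Finset.mem_Icc.mp hm
            by_cases hkm : k ≤ m
            · rw [if_neg (not_lt.mpr hkm), add_zero]
              exact hpt1 n m hkm (by omega)
            · rw [if_pos (not_le.mp hkm)]
              calc |a n m - g (n - m)| ≤ |a n m| + |g (n - m)| := abs_sub _ _
                _ ≤ B + B := add_le_add (hbound _ _) (hgB _)
                _ ≤ ω k + 2*B := by linarith [hω0 k hk1]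
        _ = ((n-1:ℕ):ℝ) * ω k + ∑ m ∈ Finset.Icc 1 (n-1), (if m < k then 2*B else 0) := by
            rw [Finset.sum_add_distrib, Finset.sum_const, hcard, nsmul_eq_mul]
        _ ≤ ((n-1:ℕ):ℝ) * ω k + 2*B*k := by
            have := hsum_ind k (2*B) (by linarith) (Finset.Icc 1 (n-1))
            linarith
    have b2 : |a n n - g 0| ≤ ω k := by
      have := hpt2 n n hkn le_rfl
      simpa using this
    have b3 : |∑ m ∈ Finset.Ioc n N', (a n m - g (m - n))| ≤ ((N'-n:ℕ):ℝ) * ω k := by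
      calc |∑ m ∈ Finset.Ioc n N', (a n m - g (m - n))|
          ≤ ∑ m ∈ Finset.Ioc n N', |a n m - g (m - n)| := Finset.abs_sum_le_sum_abs _ _
        _ ≤ ∑ _m ∈ Finset.Ioc n N', ω k := by
            apply Finset.sum_le_sum
            intro m hm
            obtain ⟨hm1, hm2⟩ := Finset.mem_Ioc.mp hm
            exact hpt2 n m hkn (le_of_lt hm1)
        _ = ((N'-n:ℕ):ℝ) * ω k := by
            rw [Finset.sum_const, Nat.card_Ioc, nsmul_eq_mul]
    have ec : ((n-1:ℕ):ℝ) + 1 + ((N'-n:ℕ):ℝ) = (N':ℝ) := by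
      have h3 : ((n-1) + 1 + (N'-n) : ℕ) = N' := by omega
      exact_mod_cast h3
    calc |(∑ m ∈ Finset.Icc 1 (n-1), (a n m - g (n - m))) + (a n n - g 0)
          + ∑ m ∈ Finset.Ioc n N', (a n m - g (m - n))|
        ≤ |(∑ m ∈ Finset.Icc 1 (n-1), (a n m - g (n - m))) + (a n n - g 0)|
          + |∑ m ∈ Finset.Ioc n N', (a n m - g (m - n))| := abs_add_le _ _
      _ ≤ |∑ m ∈ Finset.Icc 1 (n-1), (a n m - g (n - m))| + |a n n - g 0|
          + |∑ m ∈ Finset.Ioc n N', (a n m - g (m - n))| := by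
          have := abs_add_le (∑ m ∈ Finset.Icc 1 (n-1), (a n m - g (n - m))) (a n n - g 0)
          linarith
      _ ≤ (((n-1:ℕ):ℝ) * ω k + 2*B*k) + ω k + ((N'-n:ℕ):ℝ) * ω k := by linarith
      _ = (((n-1:ℕ):ℝ) + 1 + ((N'-n:ℕ):ℝ)) * ω k + 2*B*k := by ring
      _ = N' * ω k + 2*B*k := by rw [ec]
  have hrowtriv : ∀ n N' : ℕ, 1 ≤ n → n ≤ N' →
      |(∑ m ∈ Finset.Icc 1 N', a n m) - (G (n-1) + g 0 + G (N'-n))| ≤ 2*B*N' := by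
    intro n N' h1 h2
    have c1 : |∑ m ∈ Finset.Icc 1 N', a n m| ≤ B * N' := by
      have := hsumB (Finset.Icc 1 N') (fun m => a n m) (fun i _ => hbound n i)
      rwa [hcard] at this
    have c2 := hGB (n-1)
    have c3 : |g 0| ≤ B := hgB 0
    have c4 := hGB (N'-n)
    have ec : ((n-1:ℕ):ℝ) + 1 + ((N'-n:ℕ):ℝ) = (N':ℝ) := by
      have h3 : ((n-1) + 1 + (N'-n) : ℕ) = N' := by omega
      exact_mod_cast h3
    have c5 : |G (n-1) + g 0 + G (N'-n)| ≤ B * N' := by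
      calc |G (n-1) + g 0 + G (N'-n)| ≤ |G (n-1) + g 0| + |G (N'-n)| := abs_add_le _ _
        _ ≤ |G (n-1)| + |g 0| + |G (N'-n)| := by
            have := abs_add_le (G (n-1)) (g 0); linarith
        _ ≤ B * ((n-1:ℕ):ℝ) + B + B * ((N'-n:ℕ):ℝ) := by linarith
        _ = B * (((n-1:ℕ):ℝ) + 1 + ((N'-n:ℕ):ℝ)) := by ring
        _ = B * N' := by rw [ec]
    calc |(∑ m ∈ Finset.Icc 1 N', a n m) - (G (n-1) + g 0 + G (N'-n))|
        ≤ |∑ m ∈ Finset.Icc 1 N', a n m| + |G (n-1) + g 0 + G (N'-n)| := abs_sub _ _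
      _ ≤ B * N' + B * N' := add_le_add c1 c5
      _ = 2*B*N' := by ring
  have hrowlam : ∀ n N' : ℕ, 1 ≤ n → n ≤ N' →
      |(G (n-1) + g 0 + G (N'-n)) - lam * N'| ≤ ε/8 * N' + (2*c₀ + 2*B) := by
    intro n N' h1 h2
    have ec1 : ((n-1:ℕ):ℝ) = (n:ℝ) - 1 := by
      have := Nat.cast_sub (R := ℝ) h1; simpa using this
    have ec2 : ((N'-n:ℕ):ℝ) = (N':ℝ) - (n:ℝ) := by
      have := Nat.cast_sub (R := ℝ) h2; simpa using this
    have e : (G (n-1) + g 0 + G (N'-n)) - lam * N'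
        = (G (n-1) - lam * ((n-1:ℕ):ℝ)) + (g 0 - lam)
          + (G (N'-n) - lam * ((N'-n:ℕ):ℝ)) := by
      rw [ec1, ec2]; ring
    rw [e]
    have b1 := hG (n-1)
    have b2 := hG (N'-n)
    have b3 : |g 0 - lam| ≤ 2*B := by
      calc |g 0 - lam| ≤ |g 0| + |lam| := abs_sub _ _
        _ ≤ B + B := add_le_add (hgB 0) hlamB
        _ = 2*B := by ring
    have hsum3 : ((n-1:ℕ):ℝ) + ((N'-n:ℕ):ℝ) ≤ (N':ℝ) := by
      have h3 : ((n-1) + (N'-n) : ℕ) ≤ N' := by omega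
      exact_mod_cast h3
    have t1 : |(G (n-1) - lam * ((n-1:ℕ):ℝ)) + (g 0 - lam)
          + (G (N'-n) - lam * ((N'-n:ℕ):ℝ))|
        ≤ |G (n-1) - lam * ((n-1:ℕ):ℝ)| + |g 0 - lam|
          + |G (N'-n) - lam * ((N'-n:ℕ):ℝ)| := by
      have u1 := abs_add_le ((G (n-1) - lam * ((n-1:ℕ):ℝ)) + (g 0 - lam))
        (G (N'-n) - lam * ((N'-n:ℕ):ℝ))
      have u2 := abs_add_le (G (n-1) - lam * ((n-1:ℕ):ℝ)) (g 0 - lam)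
      linarith
    have hε8 : (0:ℝ) ≤ ε/8 := by positivity
    have : ε/8 * ((n-1:ℕ):ℝ) + ε/8 * ((N'-n:ℕ):ℝ) ≤ ε/8 * N' := by nlinarith
    linarith
  set Cr : ℝ := 4*B*k + 2*c₀ + 2*B with hCrdef
  have hCr0 : 0 ≤ Cr := by positivity
  obtain ⟨N₁, hN₁⟩ := exists_nat_gt (Cr / (ε/2))
  set N₀ := max (max k 1) N₁ with hN₀def
  refine ⟨N₀, le_trans (le_max_right k 1) (le_max_left _ _), ?_⟩
  have hmain : ∀ N N' : ℕ, N₀ ≤ N → N ≤ N' →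
      |((N:ℝ) * (N':ℝ))⁻¹ * ∑ n ∈ Finset.Icc 1 N, ∑ m ∈ Finset.Icc 1 N', a n m - L| ≤ ε := by
    intro N N' hN hNN'
    have hN1 : 1 ≤ N := le_trans (le_trans (le_max_right k 1) (le_max_left _ _)) hN
    have hkN : k ≤ N := le_trans (le_trans (le_max_left k 1) (le_max_left _ _)) hN
    have hN'1 : 1 ≤ N' := le_trans hN1 hNN'
    have hNr : (0:ℝ) < N := by exact_mod_cast hN1
    have hN'r : (0:ℝ) < N' := by exact_mod_cast hN'1
    have hNN'r : (N:ℝ) ≤ (N':ℝ) := by exact_mod_cast hNN'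
    have hnum : |(∑ n ∈ Finset.Icc 1 N, ∑ m ∈ Finset.Icc 1 N', a n m)
          - lam * ((N:ℝ) * (N':ℝ))|
        ≤ (ω k + ε/8) * ((N:ℝ) * (N':ℝ)) + Cr * N' := by
      have e : (∑ n ∈ Finset.Icc 1 N, ∑ m ∈ Finset.Icc 1 N', a n m)
            - lam * ((N:ℝ) * (N':ℝ))
          = ∑ n ∈ Finset.Icc 1 N, ((∑ m ∈ Finset.Icc 1 N', a n m) - lam * (N':ℝ)) := by
        rw [Finset.sum_sub_distrib, Finset.sum_const, hcard, nsmul_eq_mul]; ring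
      rw [e]
      calc |∑ n ∈ Finset.Icc 1 N, ((∑ m ∈ Finset.Icc 1 N', a n m) - lam * (N':ℝ))|
          ≤ ∑ n ∈ Finset.Icc 1 N, |(∑ m ∈ Finset.Icc 1 N', a n m) - lam * (N':ℝ)| :=
            Finset.abs_sum_le_sum_abs _ _
        _ ≤ ∑ n ∈ Finset.Icc 1 N, ((ω k + ε/8) * (N':ℝ) + (2*B*k + 2*c₀ + 2*B)
              + (if n < k then 2*B*N' else 0)) := by
            apply Finset.sum_le_sum
            intro n hn
            obtain ⟨hn1, hnN⟩ := Finset.mem_Icc.mp hn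
            have hnN' : n ≤ N' := le_trans hnN hNN'
            have step2 := hrowlam n N' hn1 hnN'
            have tri := abs_sub_le (∑ m ∈ Finset.Icc 1 N', a n m)
              (G (n-1) + g 0 + G (N'-n)) (lam * (N':ℝ))
            by_cases hkn : k ≤ n
            · have step1 := hrowest n N' hkn hnN'
              rw [if_neg (not_lt.mpr hkn)]
              linarith [tri, step1, step2]
            · have step1 := hrowtriv n N' hn1 hnN'
              rw [if_pos (not_le.mp hkn)]
              have hωN : 0 ≤ ω k * (N':ℝ) := mul_nonneg (hω0 k hk1) (le_of_lt hN'r)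
              have hε8 : (0:ℝ) ≤ ε/8 * N' := by positivity
              have hBk : (0:ℝ) ≤ 2*B*(k:ℝ) := by positivity
              linarith [tri, step1, step2]
        _ = (N:ℝ) * ((ω k + ε/8) * (N':ℝ) + (2*B*k + 2*c₀ + 2*B))
              + ∑ n ∈ Finset.Icc 1 N, (if n < k then 2*B*N' else 0) := by
            rw [Finset.sum_add_distrib, Finset.sum_const, hcard, nsmul_eq_mul]
        _ ≤ (N:ℝ) * ((ω k + ε/8) * (N':ℝ) + (2*B*k + 2*c₀ + 2*B)) + 2*B*N'*k := by
            have := hsum_ind k (2*B*N') (by positivity) (Finset.Icc 1 N)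
            linarith
        _ ≤ (ω k + ε/8) * ((N:ℝ) * (N':ℝ)) + Cr * N' := by
            have h5 : (N:ℝ) * (2*B*k + 2*c₀ + 2*B) ≤ (N':ℝ) * (2*B*k + 2*c₀ + 2*B) := by
              apply mul_le_mul_of_nonneg_right hNN'r (by positivity)
            rw [hCrdef]
            linarith [h5]
    have e2 : ((N:ℝ) * (N':ℝ))⁻¹ * (∑ n ∈ Finset.Icc 1 N, ∑ m ∈ Finset.Icc 1 N', a n m) - lam
        = ((N:ℝ) * (N':ℝ))⁻¹ * ((∑ n ∈ Finset.Icc 1 N, ∑ m ∈ Finset.Icc 1 N', a n m)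
            - lam * ((N:ℝ) * (N':ℝ))) := by
      field_simp
    have hdiv : |((N:ℝ) * (N':ℝ))⁻¹ * (∑ n ∈ Finset.Icc 1 N, ∑ m ∈ Finset.Icc 1 N', a n m)
          - lam| ≤ ω k + ε/8 + Cr / N := by
      rw [e2, abs_mul, abs_inv, abs_mul, Nat.abs_cast, Nat.abs_cast]
      have e3 : ((N:ℝ) * (N':ℝ))⁻¹ * ((ω k + ε/8) * ((N:ℝ) * (N':ℝ)) + Cr * N')
          = ω k + ε/8 + Cr / N := by
        field_simp
      calc ((N:ℝ) * (N':ℝ))⁻¹ * |(∑ n ∈ Finset.Icc 1 N, ∑ m ∈ Finset.Icc 1 N', a n m)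
            - lam * ((N:ℝ) * (N':ℝ))|
          ≤ ((N:ℝ) * (N':ℝ))⁻¹ * ((ω k + ε/8) * ((N:ℝ) * (N':ℝ)) + Cr * N') :=
            mul_le_mul_of_nonneg_left hnum (by positivity)
        _ = ω k + ε/8 + Cr / N := e3
    have hCrN : Cr / N ≤ ε/2 := by
      have hN₁N : (N₁:ℝ) ≤ (N:ℝ) := by
        exact_mod_cast le_trans (le_max_right (max k 1) N₁) hN
      have h6 : Cr / (ε/2) < (N:ℝ) := lt_of_lt_of_le hN₁ hN₁N
      rw [div_le_iff₀ hNr]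
      rw [div_lt_iff₀ (by positivity : (0:ℝ) < ε/2)] at h6
      linarith
    have hlamL : |lam - L| ≤ ω k := hLk k hk1
    calc |((N:ℝ) * (N':ℝ))⁻¹ * ∑ n ∈ Finset.Icc 1 N, ∑ m ∈ Finset.Icc 1 N', a n m - L|
        ≤ |((N:ℝ) * (N':ℝ))⁻¹ * ∑ n ∈ Finset.Icc 1 N, ∑ m ∈ Finset.Icc 1 N', a n m - lam|
          + |lam - L| := abs_sub_le _ _ _
      _ ≤ (ω k + ε/8 + Cr / N) + ω k := add_le_add hdiv hlamL
      _ ≤ ε := by linarith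
  intro N N' hN hN'
  rcases le_total N N' with h | h
  · exact hmain N N' hN h
  · have hsym : ∑ n ∈ Finset.Icc 1 N, ∑ m ∈ Finset.Icc 1 N', a n m
        = ∑ n ∈ Finset.Icc 1 N', ∑ m ∈ Finset.Icc 1 N, a n m := by
      rw [Finset.sum_comm]
      exact Finset.sum_congr rfl (fun n _ => Finset.sum_congr rfl (fun m _ => hsymm m n))
    rw [hsym, mul_comm ((N:ℝ))]
    exact hmain N' N hN' h

lemma clamp_est (Cb x z : ℝ) (hCb0 : 0 ≤ Cb) (hx : |x| ≤ Cb) :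
    |x - max (-Cb) (min Cb z)| ≤ |x - z| := by
  obtain ⟨hx1, hx2⟩ := abs_le.mp hx
  rcases le_total z (-Cb) with h1 | h1
  · have e : max (-Cb) (min Cb z) = -Cb := by
      rw [min_eq_right (by linarith), max_eq_left h1]
    rw [e, sub_neg_eq_add, abs_of_nonneg (by linarith), abs_of_nonneg (by linarith)]
    linarith
  · rcases le_total z Cb with h2 | h2
    · rw [min_eq_right h2, max_eq_right h1]
    · have e : max (-Cb) (min Cb z) = Cb := by
        rw [min_eq_left h2, max_eq_right (by linarith)]
      rw [e, abs_of_nonpos (by linarith), abs_of_nonpos (by linarith)]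
      linarith


/-- Theorem 4.1: a weakly asymptotically stationary sequence — i.e. one
satisfying, for every `b ∈ C_c(ℝ^D)`, the correlation-limit condition (A2) and the
asymptotic correlation stationarity (A3) — is weakly (S)-convergent; in particular the
Cesàro averages `(1/N) ∑_{n=1}^N b(U_n)` converge strongly in `L¹(Q)` to some
`b̄ ∈ L^∞(Q)`. -/
theorem stmt11 {M D : ℕ} (Q : Set (Fin M → ℝ)) (hQm : MeasurableSet Q)
    (hQfin : volume Q < ⊤)
    (U : ℕ → (Fin M → ℝ) → EuclideanSpace ℝ (Fin D)) (hU : ∀ n, Measurable (U n))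
    (hA : ∀ b : EuclideanSpace ℝ (Fin D) → ℝ, Continuous b → HasCompactSupport b →
      (∀ m : ℕ, 1 ≤ m → ∃ l : ℝ,
        Tendsto (fun N : ℕ => (N : ℝ)⁻¹ *
            ∑ n ∈ Finset.Icc 1 N, ∫ y in Q, b (U n y) * b (U m y)) atTop (𝓝 l)) ∧
      (∃ ω : ℕ → ℝ, Tendsto ω atTop (𝓝 0) ∧
        ∀ k k₁ k₂ : ℕ, 1 ≤ k → k ≤ k₁ → k₁ ≤ k₂ → ∀ n : ℕ,
          |∫ y in Q,
              (b (U k₁ y) * b (U k₂ y) - b (U (k₁ + n) y) * b (U (k₂ + n) y))| ≤ ω k)) :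
    WeaklySConv Q U ∧
    (∀ b : EuclideanSpace ℝ (Fin D) → ℝ, Continuous b → HasCompactSupport b →
      ∃ bbar : (Fin M → ℝ) → ℝ, Measurable bbar ∧ (∃ C : ℝ, ∀ y, |bbar y| ≤ C) ∧
        Tendsto (fun N : ℕ =>
            ∫ y in Q, |(N : ℝ)⁻¹ * (∑ n ∈ Finset.Icc 1 N, b (U n y)) - bbar y|)
          atTop (𝓝 0)) := by
  haveI hfin : IsFiniteMeasure (volume.restrict Q) :=
    ⟨by rw [Measure.restrict_apply_univ]; exact hQfin⟩
  have key : ∀ b : EuclideanSpace ℝ (Fin D) → ℝ, Continuous b → HasCompactSupport b →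
      (∃ ℓ : ℕ → ℝ,
        (∀ m : ℕ, 1 ≤ m → Tendsto (fun N : ℕ => (N : ℝ)⁻¹ *
            ∑ n ∈ Finset.Icc 1 N, ∫ y in Q, b (U n y) * b (U m y)) atTop (𝓝 (ℓ m))) ∧
        ∃ L : ℝ,
          Tendsto (fun N : ℕ => ((N : ℝ) ^ 2)⁻¹ *
              ∑ n ∈ Finset.Icc 1 N, ∑ m ∈ Finset.Icc 1 N, ∫ y in Q, b (U n y) * b (U m y))
            atTop (𝓝 L) ∧
          Tendsto (fun K : ℕ => (K : ℝ)⁻¹ * ∑ m ∈ Finset.Icc 1 K, ℓ m) atTop (𝓝 L)) ∧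
      (∃ bbar : (Fin M → ℝ) → ℝ, Measurable bbar ∧ (∃ C : ℝ, ∀ y, |bbar y| ≤ C) ∧
        Tendsto (fun N : ℕ =>
            ∫ y in Q, |(N : ℝ)⁻¹ * (∑ n ∈ Finset.Icc 1 N, b (U n y)) - bbar y|)
          atTop (𝓝 0)) := by
    intro b hb hbc
    obtain ⟨hA2', ω, hω, hA3'⟩ := hA b hb hbc
    obtain ⟨Cb₀, hCb₀⟩ := hbc.exists_bound_of_continuous hb
    set Cb : ℝ := max Cb₀ 0 with hCbdef
    have hCb0 : 0 ≤ Cb := le_max_right _ _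
    have hCb : ∀ x, |b x| ≤ Cb := fun x =>
      le_trans (by simpa using hCb₀ x) (le_max_left _ _)
    have hfm : ∀ n, Measurable (fun y => b (U n y)) := fun n => hb.measurable.comp (hU n)
    have hprodbd : ∀ (n m : ℕ) (y : Fin M → ℝ), ‖b (U n y) * b (U m y)‖ ≤ Cb * Cb := by
      intro n m y
      rw [Real.norm_eq_abs, abs_mul]
      exact mul_le_mul (hCb _) (hCb _) (abs_nonneg _) hCb0
    have hint : ∀ n m : ℕ, Integrable (fun y => b (U n y) * b (U m y)) (volume.restrict Q) := by
      intro n m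
      exact (integrable_const (Cb * Cb)).mono' (((hfm n).mul (hfm m)).aestronglyMeasurable)
        (Eventually.of_forall (hprodbd n m))
    set B : ℝ := Cb * Cb * (volume Q).toReal with hBdef
    have hab : ∀ n m : ℕ, |∫ y in Q, b (U n y) * b (U m y)| ≤ B := by
      intro n m
      have := norm_integral_le_of_norm_le_const (μ := volume.restrict Q)
        (f := fun y => b (U n y) * b (U m y)) (C := Cb * Cb)
        (Eventually.of_forall (hprodbd n m))
      rw [measureReal_def, Measure.restrict_apply_univ] at this
      simpa [Real.norm_eq_abs] using this
    have hasymm : ∀ n m : ℕ,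
        (∫ y in Q, b (U n y) * b (U m y)) = ∫ y in Q, b (U m y) * b (U n y) := by
      intro n m
      exact integral_congr_ae (Eventually.of_forall fun y => mul_comm _ _)
    set ℓ : ℕ → ℝ := fun m => if h : 1 ≤ m then (hA2' m h).choose else 0 with hℓdef
    have hA2 : ∀ m : ℕ, 1 ≤ m → Tendsto (fun N : ℕ => (N : ℝ)⁻¹ *
        ∑ n ∈ Finset.Icc 1 N, ∫ y in Q, b (U n y) * b (U m y)) atTop (𝓝 (ℓ m)) := by
      intro m hm
      have e : ℓ m = (hA2' m hm).choose := by rw [hℓdef]; simp [hm]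
      rw [e]
      exact (hA2' m hm).choose_spec
    have hA3 : ∀ k k₁ k₂ : ℕ, 1 ≤ k → k ≤ k₁ → k₁ ≤ k₂ → ∀ n : ℕ,
        |(∫ y in Q, b (U k₁ y) * b (U k₂ y))
          - ∫ y in Q, b (U (k₁+n) y) * b (U (k₂+n) y)| ≤ ω k := by
      intro k k₁ k₂ hk h1 h2 n
      have h3 := hA3' k k₁ k₂ hk h1 h2 n
      rwa [integral_sub (hint k₁ k₂) (hint (k₁+n) (k₂+n))] at h3
    obtain ⟨L, hTL, hkey⟩ := abstract_key (fun n m => ∫ y in Q, b (U n y) * b (U m y))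
      B hab hasymm ℓ hA2 ω hω hA3
    constructor
    · refine ⟨ℓ, hA2, L, ?_, ?_⟩
      · rw [Metric.tendsto_atTop]
        intro ε hε
        obtain ⟨N₀, hN₀1, hkeyε⟩ := hkey (ε/2) (by positivity)
        refine ⟨N₀, fun N hN => ?_⟩
        have h1 := hkeyε N N hN hN
        rw [Real.dist_eq]
        have e : ((N:ℝ)^2)⁻¹ = ((N:ℝ) * (N:ℝ))⁻¹ := by rw [sq]
        rw [e]
        exact lt_of_le_of_lt h1 (by linarith)
      · have h1 : Tendsto (fun i : ℕ => ℓ (i+1)) atTop (𝓝 L) :=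
          hTL.comp (tendsto_add_atTop_nat 1)
        have h2 := h1.cesaro
        apply h2.congr
        intro K
        congr 1
        refine Finset.sum_nbij' (fun i => i + 1) (fun m => m - 1) ?_ ?_ ?_ ?_ ?_ <;>
          intro x hx <;>
            simp only [Finset.mem_range, Finset.mem_Icc] at hx ⊢
        · omega
        · omega
        · omega
        · omega
    · -- strong L¹ convergence of the Cesàro means
      set S : ℕ → (Fin M → ℝ) → ℝ :=
        fun N y => (N:ℝ)⁻¹ * ∑ n ∈ Finset.Icc 1 N, b (U n y) with hSdef
      have hSm : ∀ N, Measurable (S N) := fun N =>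
        (Finset.measurable_sum _ (fun i _ => hfm i)).const_mul _
      have hSb : ∀ N y, |S N y| ≤ Cb := by
        intro N y
        rcases Nat.eq_zero_or_pos N with h0 | h0
        · subst h0
          simp only [hSdef, Nat.cast_zero, inv_zero, zero_mul, abs_zero]
          exact hCb0
        · have hN0 : (0:ℝ) < N := by exact_mod_cast h0
          have h1 : |∑ n ∈ Finset.Icc 1 N, b (U n y)| ≤ Cb * N := by
            calc |∑ n ∈ Finset.Icc 1 N, b (U n y)|
                ≤ ∑ n ∈ Finset.Icc 1 N, |b (U n y)| := Finset.abs_sum_le_sum_abs _ _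
              _ ≤ ∑ _n ∈ Finset.Icc 1 N, Cb := Finset.sum_le_sum fun i _ => hCb _
              _ = Cb * N := by
                  rw [Finset.sum_const, nsmul_eq_mul, Nat.card_Icc, mul_comm]
                  norm_num
          show |(N:ℝ)⁻¹ * ∑ n ∈ Finset.Icc 1 N, b (U n y)| ≤ Cb
          rw [abs_mul, abs_inv, Nat.abs_cast]
          calc (N:ℝ)⁻¹ * |∑ n ∈ Finset.Icc 1 N, b (U n y)|
              ≤ (N:ℝ)⁻¹ * (Cb * N) := mul_le_mul_of_nonneg_left h1 (by positivity)
            _ = Cb := by field_simp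
      have hSmem : ∀ N, MemLp (S N) 2 (volume.restrict Q) := fun N =>
        MemLp.of_bound (hSm N).aestronglyMeasurable Cb
          (Eventually.of_forall fun y => by rw [Real.norm_eq_abs]; exact hSb N y)
      set φ : ℕ → Lp ℝ 2 (volume.restrict Q) := fun N => ((hSmem N).toLp (S N)) with hφdef
      have hinner : ∀ N N' : ℕ, (inner ℝ (φ N) (φ N') : ℝ)
          = ((N:ℝ) * (N':ℝ))⁻¹ * ∑ n ∈ Finset.Icc 1 N, ∑ m ∈ Finset.Icc 1 N',
              ∫ y in Q, b (U n y) * b (U m y) := by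
        intro N N'
        rw [MeasureTheory.L2.inner_def]
        have e1 : ∫ y, (inner ℝ ((φ N : (Fin M → ℝ) → ℝ) y) ((φ N' : (Fin M → ℝ) → ℝ) y) : ℝ)
              ∂(volume.restrict Q)
            = ∫ y in Q, ((N:ℝ) * (N':ℝ))⁻¹ * ∑ n ∈ Finset.Icc 1 N, ∑ m ∈ Finset.Icc 1 N',
                (b (U n y) * b (U m y)) := by
          apply integral_congr_ae
          filter_upwards [(hSmem N).coeFn_toLp, (hSmem N').coeFn_toLp] with y h1 h2
          simp only [RCLike.inner_apply, starRingEnd_apply, star_trivial]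
          rw [h1, h2, mul_comm]
          show S N y * S N' y = _
          have e2 : S N y * S N' y
              = ((N:ℝ) * (N':ℝ))⁻¹ * ((∑ n ∈ Finset.Icc 1 N, b (U n y))
                  * (∑ m ∈ Finset.Icc 1 N', b (U m y))) := by
            rw [hSdef]
            show ((N:ℝ)⁻¹ * _) * ((N':ℝ)⁻¹ * _) = _
            rw [mul_inv]
            ring
          rw [e2, Finset.sum_mul_sum]
        rw [e1, integral_const_mul]
        congr 1
        have hint2 : ∀ n : ℕ, Integrable
            (fun y => ∑ m ∈ Finset.Icc 1 N', b (U n y) * b (U m y)) (volume.restrict Q) :=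
          fun n => integrable_finset_sum _ (fun m _ => hint n m)
        rw [integral_finset_sum _ (fun n _ => hint2 n)]
        apply Finset.sum_congr rfl
        intro n _
        rw [integral_finset_sum _ (fun m _ => hint n m)]
      have hcauchyφ : CauchySeq φ := by
        rw [Metric.cauchySeq_iff']
        intro ε hε
        obtain ⟨N₀, hN₀1, hkeyε⟩ := hkey (ε^2/8) (by positivity)
        refine ⟨N₀, fun n hn => ?_⟩
        have h1 := hkeyε n n hn hn
        have h2 := hkeyε N₀ N₀ le_rfl le_rfl
        have h3 := hkeyε n N₀ hn le_rfl
        rw [dist_eq_norm]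
        have en : ‖φ n‖^2 = (inner ℝ (φ n) (φ n) : ℝ) := (real_inner_self_eq_norm_sq _).symm
        have eN : ‖φ N₀‖^2 = (inner ℝ (φ N₀) (φ N₀) : ℝ) := (real_inner_self_eq_norm_sq _).symm
        have h4 : ‖φ n - φ N₀‖^2 < ε^2 := by
          rw [norm_sub_sq_real, en, eN, hinner n n, hinner N₀ N₀, hinner n N₀]
          obtain ⟨h1a, h1b⟩ := abs_le.mp h1
          obtain ⟨h2a, h2b⟩ := abs_le.mp h2
          obtain ⟨h3a, h3b⟩ := abs_le.mp h3
          have hεsq : 0 < ε^2 := by positivity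
          linarith
        have h5 : (0:ℝ) ≤ ε := le_of_lt hε
        exact lt_of_pow_lt_pow_left₀ 2 h5 h4
      obtain ⟨F, hF⟩ := cauchySeq_tendsto_of_complete hcauchyφ
      have hFmem : MemLp (F : (Fin M → ℝ) → ℝ) 2 (volume.restrict Q) := Lp.memLp F
      set gR : (Fin M → ℝ) → ℝ := (F : (Fin M → ℝ) → ℝ) with hgRdef
      set bbar : (Fin M → ℝ) → ℝ := fun y => max (-Cb) (min Cb (gR y)) with hbbardef
      have hbbarm : Measurable bbar :=
        measurable_const.max (measurable_const.min (Lp.stronglyMeasurable F).measurable)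
      refine ⟨bbar, hbbarm, ⟨Cb, ?_⟩, ?_⟩
      · intro y
        rw [hbbardef, abs_le]
        constructor
        · exact le_max_left _ _
        · exact max_le (by linarith) (min_le_left _ _)
      · -- the limit
        set cE : ENNReal := (volume.restrict Q) Set.univ
            ^ ((1:ℝ)/(1:ENNReal).toReal - 1/(2:ENNReal).toReal) with hcEdef
        have hcE : cE ≠ ⊤ := by
          apply (ENNReal.rpow_lt_top_of_nonneg _ (measure_ne_top _ _)).ne
          simp
          norm_num
        have hbound : ∀ N : ℕ,
            (∫ y in Q, |(N : ℝ)⁻¹ * (∑ n ∈ Finset.Icc 1 N, b (U n y)) - bbar y|)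
              ≤ cE.toReal * ‖φ N - F‖ := by
          intro N
          have hu : MemLp (S N - gR) 2 (volume.restrict Q) := (hSmem N).sub hFmem
          have huae := hu.aestronglyMeasurable
          have hintbbar : Integrable (fun y => |S N y - bbar y|) (volume.restrict Q) := by
            apply (integrable_const (Cb + Cb)).mono'
              (((hSm N).sub hbbarm).abs.aestronglyMeasurable)
            apply Eventually.of_forall
            intro y
            rw [Real.norm_eq_abs, abs_abs]
            calc |S N y - bbar y| ≤ |S N y| + |bbar y| := abs_sub _ _
              _ ≤ Cb + Cb := by
                  refine add_le_add (hSb N y) ?_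
                  rw [hbbardef, abs_le]
                  exact ⟨le_max_left _ _, max_le (by linarith) (min_le_left _ _)⟩
          have hintu : Integrable (fun y => |S N y - gR y|) (volume.restrict Q) :=
            (hu.integrable one_le_two).abs
          have step1 : (∫ y in Q, |S N y - bbar y|) ≤ ∫ y in Q, |S N y - gR y| := by
            apply integral_mono hintbbar hintu
            intro y
            exact clamp_est Cb (S N y) (gR y) hCb0 (hSb N y)
          have step2 : (∫ y in Q, |S N y - gR y|)
              = (eLpNorm (S N - gR) 1 (volume.restrict Q)).toReal := by
            rw [eLpNorm_one_eq_lintegral_enorm]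
            have := integral_norm_eq_lintegral_enorm huae
            simpa [Real.norm_eq_abs] using this
          have step3 := eLpNorm_le_eLpNorm_mul_rpow_measure_univ (p := (1:ENNReal)) (q := 2)
            (by norm_num) huae
          have step4 : eLpNorm (S N - gR) 2 (volume.restrict Q)
              = eLpNorm (((φ N - F : Lp ℝ 2 (volume.restrict Q)) : (Fin M → ℝ) → ℝ)) 2
                  (volume.restrict Q) := by
            apply eLpNorm_congr_ae
            filter_upwards [Lp.coeFn_sub (φ N) F, (hSmem N).coeFn_toLp] with y h1 h2
            simp only [Pi.sub_apply]
            rw [h1]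
            simp only [Pi.sub_apply]
            rw [h2]
          have step5 : (eLpNorm (S N - gR) 1 (volume.restrict Q)).toReal
              ≤ cE.toReal * ‖φ N - F‖ := by
            have hfin2 : eLpNorm (S N - gR) 2 (volume.restrict Q) ≠ ⊤ := hu.eLpNorm_ne_top
            have h6 : eLpNorm (S N - gR) 1 (volume.restrict Q)
                ≤ eLpNorm (S N - gR) 2 (volume.restrict Q) * cE := step3
            have h7 : (eLpNorm (S N - gR) 1 (volume.restrict Q)).toReal
                ≤ ((eLpNorm (S N - gR) 2 (volume.restrict Q)) * cE).toReal :=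
              ENNReal.toReal_mono (ENNReal.mul_ne_top hfin2 hcE) h6
            rw [ENNReal.toReal_mul] at h7
            have h8 : (eLpNorm (S N - gR) 2 (volume.restrict Q)).toReal = ‖φ N - F‖ := by
              rw [Lp.norm_def, step4]
            rw [h8] at h7
            linarith [h7]
          calc (∫ y in Q, |(N : ℝ)⁻¹ * (∑ n ∈ Finset.Icc 1 N, b (U n y)) - bbar y|)
              = ∫ y in Q, |S N y - bbar y| := rfl
            _ ≤ ∫ y in Q, |S N y - gR y| := step1
            _ = (eLpNorm (S N - gR) 1 (volume.restrict Q)).toReal := step2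
            _ ≤ cE.toReal * ‖φ N - F‖ := step5
        have hnorm0 : Tendsto (fun N => cE.toReal * ‖φ N - F‖) atTop (𝓝 0) := by
          have h1 : Tendsto (fun N => ‖φ N - F‖) atTop (𝓝 0) := by
            have := tendsto_iff_dist_tendsto_zero.mp hF
            apply this.congr
            intro N
            rw [dist_eq_norm]
          have := h1.const_mul cE.toReal
          simpa using this
        apply squeeze_zero (fun N => integral_nonneg fun y => abs_nonneg _) hbound hnorm0
  exact ⟨fun b hb hbc => (key b hb hbc).1, fun b hb hbc => (key b hb hbc).2⟩
end
end
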